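/- arXiv:2302.05156 — 7 statements merged into one kernel-verified Lean document; each statement's English description precedes it below -/
import Mathlib

section
/- Let n ∈ ℕ, n ≥ 1, and let V ⊆ ℝ^n be convex and non-empty. Then a set S ⊆ ℝ^n is relative generic in V if, and only if, there exists a Zariski-open set O ⊆ ℝ^n such that O ∩ V ≠ ∅ and O ∩ V ⊆ S ∩ V. -/
/-- An algebraic set in `ℝ^ι`: the common zero locus of finitely many real
polynomials in the variables indexed by `ι`. -/
def IsAlgebraicSet {ι : Type} [Fintype ι] (W : Set (ι → ℝ)) : Prop :=
  ∃ (k : ℕ) (p : Fin k → MvPolynomial ι ℝ),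
    W = {x | ∀ i, MvPolynomial.eval x (p i) = 0}

/-- A Zariski-open set is the complement of an algebraic set. -/
def IsZariskiOpen {ι : Type} [Fintype ι] (O : Set (ι → ℝ)) : Prop :=
  IsAlgebraicSet Oᶜ

/-- `S` is relative generic in `V`:  there is an algebraic set `𝕍` with
`Sᶜ ∩ V ⊆ 𝕍 ∩ V` and `𝕍ᶜ ∩ V` dense in `V` w.r.t. the (relative) Euclidean
topology. -/
def RelGeneric {ι : Type} [Fintype ι] (S V : Set (ι → ℝ)) : Prop :=
  ∃ W : Set (ι → ℝ), IsAlgebraicSet W ∧ Sᶜ ∩ V ⊆ W ∩ V ∧ V ⊆ closure (Wᶜ ∩ V)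

/-- for a convex non-empty reference set `V ⊆ ℝ^n`, a set `S` is
relative generic in `V` iff there is a Zariski-open set `O` with
`O ∩ V ≠ ∅` and `O ∩ V ⊆ S ∩ V`. -/
theorem relGeneric_iff_zariskiOpen_of_convex
    (n : ℕ) (hn : 1 ≤ n) (S V : Set (Fin n → ℝ))
    (hV : Convex ℝ V) (hVne : V.Nonempty) :
    RelGeneric S V ↔
      ∃ O : Set (Fin n → ℝ), IsZariskiOpen O ∧ (O ∩ V).Nonempty ∧ O ∩ V ⊆ S ∩ V := by
  constructor
  · rintro ⟨W, hW, h1, h2⟩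
    refine ⟨Wᶜ, by simpa [IsZariskiOpen] using hW, ?_, ?_⟩
    · obtain ⟨v, hv⟩ := hVne
      exact closure_nonempty_iff.mp ⟨v, h2 hv⟩
    · rintro x ⟨hxO, hxV⟩
      refine ⟨?_, hxV⟩
      by_contra hxS
      exact hxO (h1 ⟨hxS, hxV⟩).1
  · rintro ⟨O, ⟨k, p, hp⟩, ⟨x₀, hx₀O, hx₀V⟩, hsub⟩
    refine ⟨Oᶜ, ⟨k, p, hp⟩, ?_, ?_⟩
    · rintro x ⟨hxS, hxV⟩
      exact ⟨fun hxO => hxS (hsub ⟨hxO, hxV⟩).1, hxV⟩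
    · -- V ⊆ closure (O ∩ V)
      rw [compl_compl]
      intro v hv
      have hx₀ : ¬ (∀ i, MvPolynomial.eval x₀ (p i) = 0) := by
        intro h
        exact (show x₀ ∈ Oᶜ by rw [hp]; exact h) hx₀O
      push_neg at hx₀
      obtain ⟨i, hi⟩ := hx₀
      set L : ℝ → (Fin n → ℝ) := fun t j => v j + t * (x₀ j - v j) with hL
      have hL0 : L 0 = v := by funext j; simp [hL]
      have hL1 : L 1 = x₀ := by funext j; simp [hL]
      set q : Polynomial ℝ := MvPolynomial.aeval
        (fun j => Polynomial.C (v j) + Polynomial.C (x₀ j - v j) * Polynomial.X) (p i) with hq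
      have hqe : ∀ t : ℝ, Polynomial.eval t q = MvPolynomial.eval (L t) (p i) := by
        intro t
        have h1 : Polynomial.eval t q = Polynomial.aeval t q := by
          rw [Polynomial.coe_aeval_eq_eval]
        have h2 : (fun j => Polynomial.aeval t
            (Polynomial.C (v j) + Polynomial.C (x₀ j - v j) * Polynomial.X)) = L t := by
          funext j; simp [hL]; ring
        rw [h1, hq, ← AlgHom.comp_apply, MvPolynomial.comp_aeval, h2,
          ← MvPolynomial.coe_aeval_eq_eval]
        rfl
      have hq1 : Polynomial.eval 1 q ≠ 0 := by rw [hqe, hL1]; exact hi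
      have hqne : q ≠ 0 := fun h => hq1 (by simp [h])
      -- the root set is finite
      have hroots : {t : ℝ | Polynomial.eval t q = 0}.Finite := by
        exact Polynomial.finite_setOf_isRoot hqne
      -- tendsto
      have hcont : Continuous L := by
        apply continuous_pi
        intro j
        fun_prop
      have htend : Filter.Tendsto L (nhdsWithin 0 (Set.Ioi 0)) (nhds v) := by
        have := hcont.tendsto 0
        rw [hL0] at this
        exact this.mono_left nhdsWithin_le_nhds
      -- frequently in O ∩ V
      have hev : ∀ᶠ t in nhdsWithin (0:ℝ) (Set.Ioi 0), L t ∈ O ∩ V := by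
        have hG : ({t : ℝ | Polynomial.eval t q = 0} \ {0})ᶜ ∈ nhds (0:ℝ) := by
          apply IsOpen.mem_nhds
          · exact (hroots.subset Set.diff_subset).isClosed.isOpen_compl
          · simp
        have hIio : Set.Iio (1:ℝ) ∈ nhds (0:ℝ) := Iio_mem_nhds one_pos
        have h1' : ({t : ℝ | Polynomial.eval t q = 0} \ {0})ᶜ ∈ nhdsWithin (0:ℝ) (Set.Ioi 0) :=
          nhdsWithin_le_nhds hG
        have h2' : Set.Iio (1:ℝ) ∈ nhdsWithin (0:ℝ) (Set.Ioi 0) := nhdsWithin_le_nhds hIio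
        filter_upwards [h1', h2', self_mem_nhdsWithin] with t htG htlt htpos
        have ht0 : (0:ℝ) < t := htpos
        have htne : Polynomial.eval t q ≠ 0 := by
          intro h
          exact htG ⟨h, ne_of_gt ht0⟩
        constructor
        · -- L t ∈ O
          by_contra hLt
          have : L t ∈ Oᶜ := hLt
          rw [hp] at this
          exact htne (by rw [hqe]; exact this i)
        · -- L t ∈ V
          have := hV hv hx₀V (by have : t < 1 := htlt; linarith : (0:ℝ) ≤ 1 - t) (le_of_lt ht0) (by ring)
          convert this using 1
          funext j
          simp [hL]
          ring
      have hfreq : ∃ᶠ t in nhdsWithin (0:ℝ) (Set.Ioi 0), L t ∈ O ∩ V :=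
        hev.frequently
      exact mem_closure_of_frequently_of_tendsto hfreq htend
end

section
/- Let ℓ, n ∈ ℕ, ℓ, n ≥ 1, and let E, Q ∈ ℝ^{ℓ×n} satisfy EᵀQ = QᵀE. Set k = rank E. Then there exist orthogonal matrices P ∈ ℝ^{ℓ×ℓ}, T ∈ ℝ^{n×n}, an invertible diagonal matrix Σ_k ∈ ℝ^{k×k}, and matrices Q̃ ∈ ℝ^{k×k}, R₁ ∈ ℝ^{(ℓ−k)×k}, R₂ ∈ ℝ^{(ℓ−k)×(n−k)} such that: PET is the block matrix [[Σ_k, 0],[0, 0]]; PQT is the block matrix [[Q̃, 0],[R₁, R₂]]; Tᵀ(EᵀQ)T is the block matrix [[Σ_k Q̃, 0],[0, 0]]; Σ_k Q̃ = Q̃ᵀ Σ_k; rank Q̃ = rank(EᵀQ); and EᵀQ is positive semidefinite if, and only if, Σ_k Q̃ is positive semidefinite. -/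
open Matrix

/-- The order-preserving identification `Fin k ⊕ Fin (l - k) ≃ Fin l` for `k ≤ l`. -/
def sumEquiv (k l : ℕ) (h : k ≤ l) : Fin k ⊕ Fin (l - k) ≃ Fin l :=
  finSumFinEquiv.trans (finCongr (Nat.add_sub_cancel' h))

lemma aux_rank_fromBlocks {k a b : ℕ} (A : Matrix (Fin k) (Fin k) ℝ) :
    (fromBlocks A 0 0 0 : Matrix (Fin k ⊕ Fin a) (Fin k ⊕ Fin b) ℝ).rank = A.rank := by
  apply le_antisymm
  · have h1 : (fromBlocks A 0 0 0 : Matrix (Fin k ⊕ Fin a) (Fin k ⊕ Fin b) ℝ)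
        = fromRows (1 : Matrix (Fin k) (Fin k) ℝ) (0 : Matrix (Fin a) (Fin k) ℝ) * A *
          fromCols (1 : Matrix (Fin k) (Fin k) ℝ) (0 : Matrix (Fin k) (Fin b) ℝ) := by
      rw [fromRows_mul, fromRows_mul_fromCols]
      simp
    rw [h1]
    exact (rank_mul_le_left _ _).trans (rank_mul_le_right _ _)
  · have h2 : A = fromCols (1 : Matrix (Fin k) (Fin k) ℝ) (0 : Matrix (Fin k) (Fin a) ℝ) *
        (fromBlocks A 0 0 0 : Matrix (Fin k ⊕ Fin a) (Fin k ⊕ Fin b) ℝ) *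
        fromRows (1 : Matrix (Fin k) (Fin k) ℝ) (0 : Matrix (Fin b) (Fin k) ℝ) := by
      rw [fromCols_mul_fromBlocks, fromCols_mul_fromRows]
      simp
    conv_lhs => rw [h2]
    exact (rank_mul_le_left _ _).trans (rank_mul_le_right _ _)

lemma aux_psd_fromBlocks {k a : ℕ} (A : Matrix (Fin k) (Fin k) ℝ) :
    (fromBlocks A 0 0 0 : Matrix (Fin k ⊕ Fin a) (Fin k ⊕ Fin a) ℝ).PosSemidef ↔ A.PosSemidef := by
  constructor
  · intro h
    have := h.submatrix (Sum.inl : Fin k → Fin k ⊕ Fin a)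
    convert this using 1; ext i j; simp
  · intro h
    have h1 : (fromBlocks A 0 0 0 : Matrix (Fin k ⊕ Fin a) (Fin k ⊕ Fin a) ℝ)
        = fromRows (1 : Matrix (Fin k) (Fin k) ℝ) (0 : Matrix (Fin a) (Fin k) ℝ) * A *
          (fromRows (1 : Matrix (Fin k) (Fin k) ℝ) (0 : Matrix (Fin a) (Fin k) ℝ))ᴴ := by
      rw [conjTranspose_fromRows_eq_fromCols_conjTranspose, fromRows_mul, fromRows_mul_fromCols]
      simp
    rw [h1]
    exact h.mul_mul_conjTranspose_same _

lemma aux_svd {ℓ n : ℕ} (E : Matrix (Fin ℓ) (Fin n) ℝ)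
    (hkl : E.rank ≤ ℓ) (hkn : E.rank ≤ n) :
    ∃ (P : Matrix (Fin ℓ) (Fin ℓ) ℝ) (T : Matrix (Fin n) (Fin n) ℝ) (d : Fin E.rank → ℝ),
      Pᵀ * P = 1 ∧ Tᵀ * T = 1 ∧ (∀ i, 0 < d i) ∧
      P * E * T = Matrix.reindex (sumEquiv E.rank ℓ hkl) (sumEquiv E.rank n hkn)
        (fromBlocks (diagonal d) 0 0 0) := by
  classical
  set σl := sumEquiv E.rank ℓ hkl
  set σn := sumEquiv E.rank n hkn
  have hconj : Eᴴ = Eᵀ := by ext i j; simp [conjTranspose_apply]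
  have hG : (Eᵀ * E).IsHermitian := by
    have := isHermitian_conjTranspose_mul_self E
    rwa [hconj] at this
  have hGpsd : (Eᵀ * E).PosSemidef := by
    have := posSemidef_conjTranspose_mul_self E
    rwa [hconj] at this
  set μ : Fin n → ℝ := hG.eigenvalues with hμ
  have hμnn : ∀ i, 0 ≤ μ i := fun i => hGpsd.eigenvalues_nonneg i
  set V : Matrix (Fin n) (Fin n) ℝ := (hG.eigenvectorUnitary : Matrix (Fin n) (Fin n) ℝ) with hVdef
  have hsV : star V = Vᵀ := by ext i j; simp [conjTranspose_apply]
  have hVtV : Vᵀ * V = 1 := by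
    rw [← hsV]; exact mem_unitaryGroup_iff'.mp hG.eigenvectorUnitary.2
  have hVVt : V * Vᵀ = 1 := by
    rw [← hsV]; exact mem_unitaryGroup_iff.mp hG.eigenvectorUnitary.2
  have hspec : Vᵀ * (Eᵀ * E) * V = diagonal μ := by
    have hofreal : (RCLike.ofReal ∘ μ : Fin n → ℝ) = μ := by
      funext i; simp [RCLike.ofReal_real_eq_id]
    conv_lhs => rw [hG.spectral_theorem, Unitary.conjStarAlgAut_apply, hofreal, hsV]
    have : Vᵀ * (V * diagonal μ * Vᵀ) * V = Vᵀ * V * diagonal μ * (Vᵀ * V) := by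
      simp only [mul_assoc]
    rw [this, hVtV, one_mul, mul_one]
  have hcard1 : Fintype.card {i // μ i ≠ 0} = E.rank := by
    rw [← hG.rank_eq_card_non_zero_eigs, rank_transpose_mul_self]
  have hcard2 : Fintype.card {i // ¬ μ i ≠ 0} = n - E.rank := by
    rw [Fintype.card_subtype_compl, hcard1, Fintype.card_fin]
  set e₁ : Fin E.rank ≃ {i // μ i ≠ 0} := (Fintype.equivFinOfCardEq hcard1).symm
  set e₂ : Fin (n - E.rank) ≃ {i // ¬ μ i ≠ 0} := (Fintype.equivFinOfCardEq hcard2).symm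
  set e : Fin E.rank ⊕ Fin (n - E.rank) ≃ Fin n :=
    (Equiv.sumCongr e₁ e₂).trans (Equiv.sumCompl (fun i => μ i ≠ 0))
  have he1 : ∀ i, μ (e (Sum.inl i)) ≠ 0 := by
    intro i; simp only [e, Equiv.trans_apply, Equiv.sumCongr_apply, Sum.map_inl,
      Equiv.sumCompl_apply_inl]
    exact (e₁ i).2
  have he2 : ∀ j, μ (e (Sum.inr j)) = 0 := by
    intro j; simp only [e, Equiv.trans_apply, Equiv.sumCongr_apply, Sum.map_inr,
      Equiv.sumCompl_apply_inr]
    exact not_not.mp (e₂ j).2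
  set π : Fin n ≃ Fin n := σn.symm.trans e with hπdef
  have hπσ : ∀ c, π (σn c) = e c := by
    intro c; simp [π]
  set T : Matrix (Fin n) (Fin n) ℝ := V.submatrix id ⇑π with hTdef
  have hTt : Tᵀ = Vᵀ.submatrix ⇑π id := by rw [hTdef, transpose_submatrix]
  have hTo : Tᵀ * T = 1 := by
    rw [hTt, hTdef]
    rw [show (id : Fin n → Fin n) = ⇑(Equiv.refl (Fin n)) from rfl,
      submatrix_mul_equiv Vᵀ V ⇑π (Equiv.refl (Fin n)) ⇑π, hVtV, submatrix_one_equiv]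
  set F : Matrix (Fin ℓ) (Fin n) ℝ := E * T with hFdef
  have hFtF : Fᵀ * F = diagonal (μ ∘ ⇑π) := by
    have h1 : Fᵀ * F = Tᵀ * (Eᵀ * E) * T := by
      rw [hFdef, transpose_mul]; simp only [Matrix.mul_assoc]
    rw [h1, hTt, hTdef]
    rw [show (id : Fin n → Fin n) = ⇑(Equiv.refl (Fin n)) from rfl]
    rw [show Vᵀ.submatrix ⇑π ⇑(Equiv.refl (Fin n)) * (Eᵀ * E) * V.submatrix ⇑(Equiv.refl (Fin n)) ⇑π
        = (Vᵀ * (Eᵀ * E) * V).submatrix ⇑π ⇑π from ?_]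
    · rw [hspec, submatrix_diagonal_equiv]
    · conv_lhs => rw [show Eᵀ * E = (Eᵀ * E).submatrix ⇑(Equiv.refl (Fin n)) ⇑(Equiv.refl (Fin n)) by simp,
        submatrix_mul_equiv, submatrix_mul_equiv]
  set d : Fin E.rank → ℝ := fun i => μ (e (Sum.inl i)) with hddef
  have hdpos : ∀ i, 0 < d i := fun i => lt_of_le_of_ne (hμnn _) (Ne.symm (he1 i))
  have hFent : ∀ c c', (Fᵀ * F) (σn c) (σn c') = diagonal (μ ∘ ⇑π) (σn c) (σn c') := by
    intro c c'; rw [hFtF]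
  have hFcol0 : ∀ j p, F p (σn (Sum.inr j)) = 0 := by
    intro j p
    have h := hFent (Sum.inr j) (Sum.inr j)
    rw [mul_apply, diagonal_apply_eq] at h
    simp only [transpose_apply, Function.comp_apply, hπσ, he2] at h
    have h0 := (Finset.sum_eq_zero_iff_of_nonneg (fun q _ => mul_self_nonneg
      (F q (σn (Sum.inr j))))).mp h p (Finset.mem_univ p)
    exact mul_self_eq_zero.mp h0
  have hFinner : ∀ i i', ∑ p, F p (σn (Sum.inl i)) * F p (σn (Sum.inl i'))
      = if i = i' then d i else 0 := by
    intro i i'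
    have h := hFent (Sum.inl i) (Sum.inl i')
    rw [mul_apply] at h
    simp only [transpose_apply] at h
    rw [h, diagonal_apply]
    by_cases hii : i = i'
    · subst hii
      simp [hπσ, hddef]
    · rw [if_neg, if_neg hii]
      intro hc
      exact hii (Sum.inl_injective (σn.injective hc))
  set s : Fin E.rank → ℝ := fun i => Real.sqrt (d i) with hsdef
  have hspos : ∀ i, 0 < s i := fun i => Real.sqrt_pos.mpr (hdpos i)
  have hssq : ∀ i, s i * s i = d i := fun i => Real.mul_self_sqrt (hdpos i).le
  set u : Fin E.rank → EuclideanSpace ℝ (Fin ℓ) :=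
    fun i => WithLp.toLp 2 (fun p => (s i)⁻¹ * F p (σn (Sum.inl i)) : Fin ℓ → ℝ) with hudef
  have huapp : ∀ i p, u i p = (s i)⁻¹ * F p (σn (Sum.inl i)) := fun i p => rfl
  have hu : ∀ i i', ∑ p, u i p * u i' p = if i = i' then (1:ℝ) else 0 := by
    intro i i'
    have h1 : ∑ p, u i p * u i' p
        = (s i)⁻¹ * ((s i')⁻¹ * ∑ p, F p (σn (Sum.inl i)) * F p (σn (Sum.inl i'))) := by
      rw [Finset.mul_sum, Finset.mul_sum]
      refine Finset.sum_congr rfl fun p _ => ?_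
      rw [huapp, huapp]; ring
    rw [h1, hFinner i i']
    by_cases hii : i = i'
    · subst hii
      rw [if_pos rfl, if_pos rfl, ← hssq i, inv_mul_cancel_left₀ (hspos i).ne',
        inv_mul_cancel₀ (hspos i).ne']
    · simp [hii]
  have hcardι : Module.finrank ℝ (EuclideanSpace ℝ (Fin ℓ))
      = Fintype.card (Fin E.rank ⊕ Fin (ℓ - E.rank)) := by
    simp [Nat.add_sub_cancel' hkl]
  set v : Fin E.rank ⊕ Fin (ℓ - E.rank) → EuclideanSpace ℝ (Fin ℓ) := Sum.elim u 0 with hvdef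
  have hortho : Orthonormal ℝ ((Set.range (Sum.inl : Fin E.rank → Fin E.rank ⊕ Fin (ℓ - E.rank))).restrict v) := by
    rw [orthonormal_iff_ite]
    rintro ⟨x, i, rfl⟩ ⟨y, j, rfl⟩
    have : (inner ℝ (v (Sum.inl i)) (v (Sum.inl j)) : ℝ) = ∑ p, u i p * u j p := by
      rw [PiLp.inner_apply]
      refine Finset.sum_congr rfl fun p _ => ?_
      simp [hvdef]; ring
    show inner ℝ (v (Sum.inl i)) (v (Sum.inl j)) = _
    rw [this, hu i j]
    by_cases hij : i = j
    · subst hij; simp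
    · rw [if_neg hij, if_neg]
      intro hc
      exact hij (Sum.inl_injective (Subtype.ext_iff.mp hc))
  obtain ⟨b, hb⟩ := hortho.exists_orthonormalBasis_extension_of_card_eq hcardι
  have hbu : ∀ i, b (Sum.inl i) = u i := fun i => hb _ ⟨i, rfl⟩
  have hbo : ∀ a a', ∑ p, b a p * b a' p = if a = a' then (1:ℝ) else 0 := by
    intro a a'
    have h := orthonormal_iff_ite.mp b.orthonormal a a'
    rw [PiLp.inner_apply] at h
    simpa [mul_comm] using h
  set U : Matrix (Fin ℓ) (Fin E.rank ⊕ Fin (ℓ - E.rank)) ℝ :=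
    Matrix.of (fun p c => b c p) with hUdef
  have hUtU : Uᵀ * U = 1 := by
    ext a a'
    rw [mul_apply, one_apply]
    simpa [hUdef] using hbo a a'
  set Usq : Matrix (Fin ℓ) (Fin ℓ) ℝ := U.submatrix id ⇑σl.symm with hUsqdef
  have hUsq : Usqᵀ * Usq = 1 := by
    rw [hUsqdef, transpose_submatrix,
      show (id : Fin ℓ → Fin ℓ) = ⇑(Equiv.refl (Fin ℓ)) from rfl,
      submatrix_mul_equiv Uᵀ U ⇑σl.symm (Equiv.refl (Fin ℓ)) ⇑σl.symm, hUtU, submatrix_one_equiv]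
  refine ⟨Usqᵀ, T, s, ?_, hTo, hspos, ?_⟩
  · rw [transpose_transpose]
    exact mul_eq_one_comm.mp hUsq
  · rw [Matrix.mul_assoc, ← hFdef]
    ext p q
    obtain ⟨a, rfl⟩ := σl.surjective p
    obtain ⟨c, rfl⟩ := σn.surjective q
    rw [mul_apply]
    have hP : ∀ i, Usqᵀ (σl a) i = b a i := by
      intro i
      simp [hUsqdef, hUdef]
    have hR : (Matrix.reindex σl σn (fromBlocks (diagonal s) 0 0 0) : Matrix (Fin ℓ) (Fin n) ℝ)
        (σl a) (σn c) = fromBlocks (diagonal s) 0 0 0 a c := by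
      simp [reindex_apply, submatrix_apply]
    rw [hR]
    cases c with
    | inr j =>
      rw [show ∑ i, Usqᵀ (σl a) i * F i (σn (Sum.inr j)) = 0 from
        Finset.sum_eq_zero fun i _ => by rw [hFcol0 j i, mul_zero]]
      cases a <;> simp
    | inl j =>
      have hFc : ∀ i, F i (σn (Sum.inl j)) = s j * u j i := by
        intro i
        rw [huapp, ← mul_assoc, mul_inv_cancel₀ (hspos j).ne', one_mul]
      have : ∑ i, Usqᵀ (σl a) i * F i (σn (Sum.inl j))
          = s j * ∑ i, b a i * b (Sum.inl j) i := by
        rw [Finset.mul_sum]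
        refine Finset.sum_congr rfl fun i _ => ?_
        rw [hP, hFc, hbu]; ring
      rw [this, hbo]
      cases a with
      | inl i =>
        rw [fromBlocks_apply₁₁]
        by_cases hij : i = j
        · subst hij
          rw [if_pos rfl, mul_one, diagonal_apply_eq]
        · rw [if_neg (fun hc => hij (Sum.inl_injective hc)), mul_zero, diagonal_apply_ne _ hij]
      | inr i => simp

/-- structure of pairs `(E, Q)` with `EᵀQ = QᵀE`. -/
theorem pH_pair_normal_form (ℓ n : ℕ) (hℓ : 1 ≤ ℓ) (hn : 1 ≤ n)
    (E Q : Matrix (Fin ℓ) (Fin n) ℝ) (hEQ : Eᵀ * Q = Qᵀ * E) :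
    ∃ (P : Matrix (Fin ℓ) (Fin ℓ) ℝ) (T : Matrix (Fin n) (Fin n) ℝ)
      (Sk Qt : Matrix (Fin E.rank) (Fin E.rank) ℝ)
      (R₁ : Matrix (Fin (ℓ - E.rank)) (Fin E.rank) ℝ)
      (R₂ : Matrix (Fin (ℓ - E.rank)) (Fin (n - E.rank)) ℝ),
      -- P and T are orthogonal
      Pᵀ * P = 1 ∧ Tᵀ * T = 1 ∧
      -- Sk is an invertible diagonal matrix
      (∃ d : Fin E.rank → ℝ, Sk = Matrix.diagonal d) ∧ IsUnit Sk ∧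
      -- P E T = [[Sk, 0], [0, 0]]
      P * E * T =
        Matrix.reindex (sumEquiv E.rank ℓ (by simpa using E.rank_le_height))
          (sumEquiv E.rank n (by simpa using E.rank_le_width))
          (Matrix.fromBlocks Sk 0 0 0) ∧
      -- P Q T = [[Qt, 0], [R₁, R₂]]
      P * Q * T =
        Matrix.reindex (sumEquiv E.rank ℓ (by simpa using E.rank_le_height))
          (sumEquiv E.rank n (by simpa using E.rank_le_width))
          (Matrix.fromBlocks Qt 0 R₁ R₂) ∧
      -- Tᵀ (EᵀQ) T = [[Sk Qt, 0], [0, 0]]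
      Tᵀ * (Eᵀ * Q) * T =
        Matrix.reindex (sumEquiv E.rank n (by simpa using E.rank_le_width))
          (sumEquiv E.rank n (by simpa using E.rank_le_width))
          (Matrix.fromBlocks (Sk * Qt) 0 0 0) ∧
      -- Sk Qt = Qtᵀ Sk and rank Qt = rank (EᵀQ)
      Sk * Qt = Qtᵀ * Sk ∧ Qt.rank = (Eᵀ * Q).rank ∧
      -- EᵀQ is positive semidefinite iff Sk Qt is positive semidefinite
      ((Eᵀ * Q).PosSemidef ↔ (Sk * Qt).PosSemidef) := by
  classical
  have hkl : E.rank ≤ ℓ := by simpa using E.rank_le_height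
  have hkn : E.rank ≤ n := by simpa using E.rank_le_width
  obtain ⟨P, T, d, hP, hT, hdpos, hPET⟩ := aux_svd E hkl hkn
  set σl := sumEquiv E.rank ℓ hkl with hσl
  set σn := sumEquiv E.rank n hkn with hσn
  set Sk : Matrix (Fin E.rank) (Fin E.rank) ℝ := diagonal d with hSk
  have hSkt : Skᵀ = Sk := diagonal_transpose d
  have hSkdet : IsUnit Sk.det := by
    rw [hSk, det_diagonal]
    exact isUnit_iff_ne_zero.mpr (Finset.prod_ne_zero_iff.mpr fun i _ => (hdpos i).ne')
  have hSkunit : IsUnit Sk := (isUnit_iff_isUnit_det _).mpr hSkdet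
  have hTdet : IsUnit T.det := by
    have h := congrArg det hT
    rw [det_mul, det_transpose, det_one] at h
    exact IsUnit.of_mul_eq_one _ h
  have hTTt : T * Tᵀ = 1 := mul_eq_one_comm.mp hT
  set N : Matrix (Fin E.rank ⊕ Fin (ℓ - E.rank)) (Fin E.rank ⊕ Fin (n - E.rank)) ℝ :=
    (P * Q * T).submatrix ⇑σl ⇑σn with hN
  have hPQT : P * Q * T = reindex σl σn N := by
    rw [hN, reindex_apply, submatrix_submatrix]
    simp
  set Qt := N.toBlocks₁₁ with hQt
  set B := N.toBlocks₁₂ with hBdef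
  set R₁ := N.toBlocks₂₁ with hR₁
  set R₂ := N.toBlocks₂₂ with hR₂
  have hNblocks : N = fromBlocks Qt B R₁ R₂ := (fromBlocks_toBlocks N).symm
  have hkey : Tᵀ * (Eᵀ * Q) * T = (P * E * T)ᵀ * (P * Q * T) := by
    rw [transpose_mul, transpose_mul]
    simp only [Matrix.mul_assoc]
    rw [show Pᵀ * (P * (Q * T)) = Pᵀ * P * (Q * T) from (Matrix.mul_assoc _ _ _).symm, hP,
      Matrix.one_mul]
  have hblockprod : Tᵀ * (Eᵀ * Q) * T = reindex σn σn (fromBlocks (Sk * Qt) (Sk * B) 0 0) := by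
    rw [hkey, hPET, hPQT, hNblocks, reindex_apply, reindex_apply, transpose_submatrix,
      submatrix_mul_equiv _ _ _ σl.symm _, reindex_apply]
    congr 1
    rw [fromBlocks_transpose, transpose_zero, transpose_zero, transpose_zero, hSkt,
      fromBlocks_multiply]
    simp
  have hsymEQ : (Tᵀ * (Eᵀ * Q) * T)ᵀ = Tᵀ * (Eᵀ * Q) * T := by
    rw [transpose_mul, transpose_mul, transpose_transpose, transpose_mul, transpose_transpose,
      ← hEQ]
    simp only [Matrix.mul_assoc]
  have hsym2 : (fromBlocks (Sk * Qt) (Sk * B) 0 0 :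
      Matrix (Fin E.rank ⊕ Fin (n - E.rank)) (Fin E.rank ⊕ Fin (n - E.rank)) ℝ)ᵀ
      = fromBlocks (Sk * Qt) (Sk * B) 0 0 := by
    have h1 := hsymEQ
    rw [hblockprod, transpose_reindex] at h1
    exact (reindex σn σn).injective h1
  rw [fromBlocks_transpose, transpose_zero] at hsym2
  have hB0 : B = 0 := by
    have h12 := congrArg Matrix.toBlocks₁₂ hsym2
    rw [toBlocks_fromBlocks₁₂, toBlocks_fromBlocks₁₂] at h12
    have h0 : Sk⁻¹ * (Sk * B) = 0 := by rw [← h12, Matrix.mul_zero]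
    rwa [← Matrix.mul_assoc, nonsing_inv_mul _ hSkdet, Matrix.one_mul] at h0
  have hsymSkQt : (Sk * Qt)ᵀ = Sk * Qt := by
    have h11 := congrArg Matrix.toBlocks₁₁ hsym2
    rwa [toBlocks_fromBlocks₁₁, toBlocks_fromBlocks₁₁] at h11
  rw [hB0, Matrix.mul_zero] at hblockprod
  have hTEQT : Tᵀ * (Eᵀ * Q) * T = reindex σn σn (fromBlocks (Sk * Qt) 0 0 0) := hblockprod
  have hrank : Qt.rank = (Eᵀ * Q).rank := by
    have h1 : (Tᵀ * (Eᵀ * Q) * T).rank = (Eᵀ * Q).rank := by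
      rw [rank_mul_eq_left_of_isUnit_det _ _ hTdet,
        rank_mul_eq_right_of_isUnit_det _ _ (by rwa [det_transpose])]
    rw [hTEQT, rank_reindex, aux_rank_fromBlocks,
      rank_mul_eq_right_of_isUnit_det _ _ hSkdet] at h1
    exact h1
  have hpsd : (Eᵀ * Q).PosSemidef ↔ (Sk * Qt).PosSemidef := by
    have hconjT : Tᵀᴴ = T := by ext i j; simp [conjTranspose_apply]
    have step1 : (Eᵀ * Q).PosSemidef ↔ (Tᵀ * (Eᵀ * Q) * T).PosSemidef := by
      constructor
      · intro h
        have h2 := h.mul_mul_conjTranspose_same Tᵀ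
        rwa [hconjT] at h2
      · intro h
        have h2 := h.mul_mul_conjTranspose_same T
        have hTconj : Tᴴ = Tᵀ := by ext i j; simp [conjTranspose_apply]
        rw [hTconj] at h2
        have heq : T * (Tᵀ * (Eᵀ * Q) * T) * Tᵀ = Eᵀ * Q := by
          calc T * (Tᵀ * (Eᵀ * Q) * T) * Tᵀ
              = (T * Tᵀ) * (Eᵀ * Q) * (T * Tᵀ) := by simp only [Matrix.mul_assoc]
            _ = Eᵀ * Q := by rw [hTTt, Matrix.one_mul, Matrix.mul_one]
        rwa [heq] at h2
    have step2 : (Tᵀ * (Eᵀ * Q) * T).PosSemidef ↔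
        (fromBlocks (Sk * Qt) 0 0 0 :
          Matrix (Fin E.rank ⊕ Fin (n - E.rank)) (Fin E.rank ⊕ Fin (n - E.rank)) ℝ).PosSemidef := by
      rw [hTEQT]
      constructor
      · intro h
        have h2 := h.submatrix ⇑σn
        rwa [reindex_apply, submatrix_submatrix, Equiv.symm_comp_self, submatrix_id_id] at h2
      · intro h
        rw [reindex_apply]
        exact h.submatrix _
    rw [step1, step2, aux_psd_fromBlocks]
  exact ⟨P, T, Sk, Qt, R₁, R₂, hP, hT, ⟨d, hSk⟩, hSkunit, hPET, by rw [hPQT, hNblocks, hB0],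
    hTEQT, by rw [← hsymSkQt, transpose_mul, hSkt], hrank, hpsd⟩
end

section
/- Let ℓ, n ∈ ℕ, ℓ, n ≥ 1. Each of the sets S₁ = {(E,Q) ∈ ℝ^{ℓ×n} × ℝ^{ℓ×n} : rank Q = min{ℓ,n}} and S₂ = {(E,Q) ∈ ℝ^{ℓ×n} × ℝ^{ℓ×n} : rank E = min{ℓ,n}} is relative generic in the reference set V = {(E,Q) ∈ ℝ^{ℓ×n} × ℝ^{ℓ×n} : EᵀQ = QᵀE}. -/
open Matrix

/-- Coordinates of the product `ℝ^{ℓ×n} × ℝ^{ℓ×n}` of two matrix spaces. -/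
abbrev PairIdx (ℓ n : ℕ) := (Fin ℓ × Fin n) ⊕ (Fin ℓ × Fin n)

/-- First matrix `E` of a pair `(E, Q)`. -/
def pE {ℓ n : ℕ} (x : PairIdx ℓ n → ℝ) : Matrix (Fin ℓ) (Fin n) ℝ :=
  Matrix.of fun i j => x (Sum.inl (i, j))

/-- Second matrix `Q` of a pair `(E, Q)`. -/
def pQ {ℓ n : ℕ} (x : PairIdx ℓ n → ℝ) : Matrix (Fin ℓ) (Fin n) ℝ :=
  Matrix.of fun i j => x (Sum.inr (i, j))


namespace FRRG

open Module

noncomputable def dFun {ℓ n : ℕ} (A : Matrix (Fin ℓ) (Fin n) ℝ) : ℝ :=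
  (A * Aᵀ).det + (Aᵀ * A).det

lemma det_sq_nonneg {k m : ℕ} (A : Matrix (Fin k) (Fin m) ℝ) : (0:ℝ) ≤ (A * Aᵀ).det := by
  have h : (A * Aᵀ).PosSemidef := by
    have := Matrix.posSemidef_self_mul_conjTranspose A
    rwa [Matrix.conjTranspose_eq_transpose_of_trivial] at this
  rw [h.isHermitian.det_eq_prod_eigenvalues]
  exact Finset.prod_nonneg fun i _ => by simpa using h.eigenvalues_nonneg i

lemma sq_det_ne_iff {k : ℕ} (B : Matrix (Fin k) (Fin k) ℝ) : B.det ≠ 0 ↔ B.rank = k := by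
  constructor
  · intro h
    have := Matrix.rank_of_isUnit B ((Matrix.isUnit_iff_isUnit_det B).mpr h.isUnit)
    simpa using this
  · intro h hd
    have h1 : LinearMap.range B.mulVecLin = ⊤ := by
      apply Submodule.eq_top_of_finrank_eq
      simp [← h, Matrix.rank, Module.finrank_pi]
    have h3 : Function.Injective B.mulVecLin :=
      (LinearMap.injective_iff_surjective).mpr (LinearMap.range_eq_top.mp h1)
    have h4 : IsUnit B := by
      rw [← Matrix.mulVec_injective_iff_isUnit]; exact h3
    exact ((Matrix.isUnit_iff_isUnit_det B).mp h4).ne_zero hd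

lemma dFun_ne_iff {ℓ n : ℕ} (A : Matrix (Fin ℓ) (Fin n) ℝ) :
    dFun A ≠ 0 ↔ A.rank = min ℓ n := by
  have hAAT := det_sq_nonneg A
  have hATA : (0:ℝ) ≤ (Aᵀ * A).det := by simpa using det_sq_nonneg Aᵀ
  have hle1 : A.rank ≤ ℓ := A.rank_le_height
  have hle2 : A.rank ≤ n := A.rank_le_width
  constructor
  · intro h
    rcases (by rcases eq_or_ne (A*Aᵀ).det 0 with h1|h1
               · right; intro h2; apply h; simp [dFun, h1, h2]
               · exact Or.inl h1 : (A*Aᵀ).det ≠ 0 ∨ (Aᵀ*A).det ≠ 0) with h1 | h1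
    · have : (A * Aᵀ).rank = ℓ := by
        have := (sq_det_ne_iff (A*Aᵀ)).mp h1; simpa using this
      have hr : A.rank = ℓ := by rwa [Matrix.rank_self_mul_transpose] at this
      omega
    · have : (Aᵀ * A).rank = n := by
        have := (sq_det_ne_iff (Aᵀ*A)).mp h1; simpa using this
      have hr : A.rank = n := by rwa [Matrix.rank_transpose_mul_self] at this
      omega
  · intro h
    rcases le_total ℓ n with hln | hnl
    · have hr : A.rank = ℓ := by omega
      have h1 : (A * Aᵀ).det ≠ 0 := by
        rw [sq_det_ne_iff]
        rw [Matrix.rank_self_mul_transpose]; simpa using hr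
      have : 0 < (A * Aᵀ).det := lt_of_le_of_ne hAAT (Ne.symm h1)
      unfold dFun; positivity
    · have hr : A.rank = n := by omega
      have h1 : (Aᵀ * A).det ≠ 0 := by
        rw [sq_det_ne_iff]
        rw [Matrix.rank_transpose_mul_self]; simpa using hr
      have : 0 < (Aᵀ * A).det := lt_of_le_of_ne hATA (Ne.symm h1)
      unfold dFun; positivity

variable {ℓ n : ℕ}

lemma exists_fullrank_compatible (E : Matrix (Fin ℓ) (Fin n) ℝ) :
    ∃ Q : Matrix (Fin ℓ) (Fin n) ℝ, Q.rank = min ℓ n ∧ Eᵀ * Q = Qᵀ * E := by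
  classical
  set e : EuclideanSpace ℝ (Fin n) →ₗ[ℝ] EuclideanSpace ℝ (Fin ℓ) := Matrix.toEuclideanLin E with he
  set K : Submodule ℝ (EuclideanSpace ℝ (Fin n)) := LinearMap.ker e with hK
  set R : Submodule ℝ (EuclideanSpace ℝ (Fin ℓ)) := LinearMap.range e with hR
  have hdim1 : finrank ℝ R + finrank ℝ K = n := by
    simpa using LinearMap.finrank_range_add_finrank_ker e
  have hdim2 : finrank ℝ R + finrank ℝ Rᗮ = ℓ := by
    simpa using Submodule.finrank_add_finrank_orthogonal (K := R)
  have hcore : ∃ h : K →ₗ[ℝ] Rᗮ,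
      (n ≤ ℓ → Function.Injective h) ∧ (ℓ ≤ n → Function.Surjective h) := by
    have bK := finBasis ℝ K
    have bO := finBasis ℝ Rᗮ
    rcases le_total n ℓ with hnl | hln
    · have hd : finrank ℝ K ≤ finrank ℝ Rᗮ := by omega
      refine ⟨bO.equivFun.symm.toLinearMap ∘ₗ
        Function.ExtendByZero.linearMap ℝ (Fin.castLE hd) ∘ₗ bK.equivFun.toLinearMap, ?_, ?_⟩
      · intro _
        have h1 : Function.Injective
            (Function.ExtendByZero.linearMap ℝ (Fin.castLE hd)) := by
          intro a b hab
          exact Function.extend_injective (Fin.castLE_injective hd) (0 : Fin (finrank ℝ Rᗮ) → ℝ) (by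
            exact hab)
        exact bO.equivFun.symm.injective.comp (h1.comp bK.equivFun.injective)
      · intro hln2
        have hfr : finrank ℝ K = finrank ℝ Rᗮ := by omega
        apply (LinearMap.injective_iff_surjective_of_finrank_eq_finrank hfr).mp
        have h1 : Function.Injective
            (Function.ExtendByZero.linearMap ℝ (Fin.castLE hd)) := by
          intro a b hab
          exact Function.extend_injective (Fin.castLE_injective hd) (0 : Fin (finrank ℝ Rᗮ) → ℝ) (by
            exact hab)
        exact bO.equivFun.symm.injective.comp (h1.comp bK.equivFun.injective)
    · have hd : finrank ℝ Rᗮ ≤ finrank ℝ K := by omega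
      refine ⟨bO.equivFun.symm.toLinearMap ∘ₗ
        LinearMap.funLeft ℝ ℝ (Fin.castLE hd) ∘ₗ bK.equivFun.toLinearMap, ?_, ?_⟩
      · intro hnl2
        have hfr : finrank ℝ K = finrank ℝ Rᗮ := by omega
        apply (LinearMap.injective_iff_surjective_of_finrank_eq_finrank hfr).mpr
        have h1 : Function.Surjective (LinearMap.funLeft ℝ ℝ (Fin.castLE hd)) :=
          LinearMap.funLeft_surjective_of_injective ℝ ℝ _ (Fin.castLE_injective hd)
        exact bO.equivFun.symm.surjective.comp (h1.comp bK.equivFun.surjective)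
      · intro _
        have h1 : Function.Surjective (LinearMap.funLeft ℝ ℝ (Fin.castLE hd)) :=
          LinearMap.funLeft_surjective_of_injective ℝ ℝ _ (Fin.castLE_injective hd)
        exact bO.equivFun.symm.surjective.comp (h1.comp bK.equivFun.surjective)
  obtain ⟨h, hinj, hsurj⟩ := hcore
  set π : EuclideanSpace ℝ (Fin n) →ₗ[ℝ] K := (K.orthogonalProjectionOnto).toLinearMap with hπ
  set g : EuclideanSpace ℝ (Fin n) →ₗ[ℝ] EuclideanSpace ℝ (Fin ℓ) :=
    Rᗮ.subtype ∘ₗ h ∘ₗ π with hg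
  set q := e + g with hq
  have hgO : ∀ x, g x ∈ Rᗮ := fun x => (h (π x)).2
  have hπK : ∀ (x : EuclideanSpace ℝ (Fin n)) (hx : x ∈ K), π x = ⟨x, hx⟩ := by
    intro x hx
    have := Submodule.starProjection_eq_self_iff (K := K) (v := x) |>.mpr hx
    exact Subtype.ext this
  have heK : ∀ (x : EuclideanSpace ℝ (Fin n)), x ∈ K → e x = 0 := fun x hx => hx
  refine ⟨Matrix.toEuclideanLin.symm q, ?_, ?_⟩
  · -- rank
    have hQq : Matrix.toEuclideanLin (Matrix.toEuclideanLin.symm q) = q :=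
      Matrix.toEuclideanLin.apply_symm_apply q
    have hrank : (Matrix.toEuclideanLin.symm q : Matrix (Fin ℓ) (Fin n) ℝ).rank
        = finrank ℝ (LinearMap.range q) := by
      rw [Matrix.rank_eq_finrank_range_toLin _ (PiLp.basisFun 2 ℝ (Fin ℓ))
        (PiLp.basisFun 2 ℝ (Fin n))]
      rw [← Matrix.toEuclideanLin_eq_toLin, hQq]
    rcases le_total n ℓ with hnl | hln
    · have hqinj : Function.Injective q := by
        rw [← LinearMap.ker_eq_bot, LinearMap.ker_eq_bot']
        intro x hx
        have h1 : e x ∈ R := LinearMap.mem_range_self e x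
        have h2 : e x = -g x := eq_neg_of_add_eq_zero_left hx
        have h3 : e x ∈ Rᗮ := h2 ▸ Submodule.neg_mem _ (hgO x)
        have h4 : e x = 0 := by
          have := (Submodule.orthogonal_disjoint R).le_bot ⟨h1, h3⟩
          simpa using this
        have h5 : g x = 0 := by
          have := hx; rw [LinearMap.add_apply, h4, zero_add] at this; exact this
        have hxK : x ∈ K := h4
        have h6 : h (π x) = 0 := by
          have : (Rᗮ.subtype) (h (π x)) = 0 := h5
          exact Submodule.coe_eq_zero.mp this
        have h7 : π x = 0 := hinj hnl (by rw [h6, map_zero])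
        rw [hπK x hxK] at h7
        simpa using congrArg Subtype.val h7
      have hker : finrank ℝ (LinearMap.ker q) = 0 := by
        rw [LinearMap.ker_eq_bot.mpr hqinj]; simp
      have := LinearMap.finrank_range_add_finrank_ker q
      rw [hker, add_zero] at this
      simp only [finrank_euclideanSpace, Fintype.card_fin] at this
      rw [hrank, this, min_eq_right hnl]
    · have hqsurj : Function.Surjective q := by
        intro v
        obtain ⟨a, haR, b, hbO, hv⟩ := Submodule.exists_add_mem_mem_orthogonal (K := R) v
        obtain ⟨u, hu⟩ := haR
        obtain ⟨k, hk⟩ := hsurj hln ⟨b, hbO⟩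
        refine ⟨u - (π u : EuclideanSpace ℝ (Fin n)) + (k : EuclideanSpace ℝ (Fin n)), ?_⟩
        have hπu : π ((π u : EuclideanSpace ℝ (Fin n))) = π u := by
          rw [hπK _ (π u).2]
        have hπk : π ((k : EuclideanSpace ℝ (Fin n))) = k := by
          rw [hπK _ k.2]
        have hex : e (u - (π u : EuclideanSpace ℝ (Fin n)) + (k : EuclideanSpace ℝ (Fin n))) = a := by
          rw [map_add, map_sub, heK _ (π u).2, heK _ k.2, sub_zero, add_zero, hu]
        have hgx : g (u - (π u : EuclideanSpace ℝ (Fin n)) + (k : EuclideanSpace ℝ (Fin n))) = b := by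
          rw [hg]
          simp only [LinearMap.coe_comp, Function.comp_apply]
          rw [map_add, map_sub, hπu, hπk, sub_self, zero_add, hk]
          rfl
        rw [LinearMap.add_apply, hex, hgx, hv]
      have hrange : LinearMap.range q = ⊤ := LinearMap.range_eq_top.mpr hqsurj
      rw [hrank, hrange, finrank_top]
      simp only [finrank_euclideanSpace, Fintype.card_fin]
      rw [min_eq_left hln]
  · -- symmetry
    have hmul : ∀ (A B : Matrix (Fin ℓ) (Fin n) ℝ), Matrix.toEuclideanLin (Aᵀ * B)
        = (LinearMap.adjoint (Matrix.toEuclideanLin A)) ∘ₗ Matrix.toEuclideanLin B := by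
      intro A B
      rw [← Matrix.conjTranspose_eq_transpose_of_trivial (A := A),
        ← Matrix.toEuclideanLin_conjTranspose_eq_adjoint]
      rw [Matrix.toEuclideanLin_eq_toLin, Matrix.toEuclideanLin_eq_toLin,
        Matrix.toEuclideanLin_eq_toLin, Matrix.toLin_mul _ (PiLp.basisFun 2 ℝ (Fin ℓ)) _]
    apply Matrix.toEuclideanLin.injective
    rw [hmul, hmul, Matrix.toEuclideanLin.apply_symm_apply]
    refine LinearMap.ext fun y => ?_
    apply ext_inner_left ℝ
    intro x
    rw [LinearMap.comp_apply, LinearMap.comp_apply,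
      LinearMap.adjoint_inner_right, LinearMap.adjoint_inner_right]
    show (inner ℝ (e x) (q y) : ℝ) = inner ℝ (q x) (e y)
    have hz1 : (inner ℝ (e x) (g y) : ℝ) = 0 :=
      Submodule.inner_right_of_mem_orthogonal (LinearMap.mem_range_self e x) (hgO y)
    have hz2 : (inner ℝ (g x) (e y) : ℝ) = 0 := by
      rw [real_inner_comm]
      exact Submodule.inner_right_of_mem_orthogonal (LinearMap.mem_range_self e y) (hgO x)
    rw [hq]
    simp only [LinearMap.add_apply, inner_add_right, inner_add_left, hz1, hz2]

noncomputable def Pmv (ℓ n : ℕ) : MvPolynomial (PairIdx ℓ n) ℝ :=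
  let QX : Matrix (Fin ℓ) (Fin n) (MvPolynomial (PairIdx ℓ n) ℝ) :=
    Matrix.of fun i j => MvPolynomial.X (Sum.inr (i, j))
  (QX * QXᵀ).det + (QXᵀ * QX).det

lemma eval_Pmv (x : PairIdx ℓ n → ℝ) :
    MvPolynomial.eval x (Pmv ℓ n) = dFun (pQ x) := by
  have hmap : (Matrix.of fun i j => MvPolynomial.X (R := ℝ) (Sum.inr (i, j)) :
      Matrix (Fin ℓ) (Fin n) (MvPolynomial (PairIdx ℓ n) ℝ)).map
        (MvPolynomial.eval x) = pQ x := by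
    ext i j
    simp [pQ]
  rw [Pmv, dFun]
  rw [map_add]
  rw [RingHom.map_det (MvPolynomial.eval x), RingHom.map_det (MvPolynomial.eval x)]
  rw [RingHom.mapMatrix_apply, RingHom.mapMatrix_apply]
  rw [Matrix.map_mul, Matrix.map_mul, Matrix.transpose_map, hmap]

noncomputable def segPoly {ℓ n : ℕ} (Q Qs : Matrix (Fin ℓ) (Fin n) ℝ) : Polynomial ℝ :=
  let Mt : Matrix (Fin ℓ) (Fin n) (Polynomial ℝ) :=
    Matrix.of fun i j => Polynomial.C (Q i j) + Polynomial.X * Polynomial.C (Qs i j - Q i j)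
  (Mt * Mtᵀ).det + (Mtᵀ * Mt).det

lemma eval_segPoly (Q Qs : Matrix (Fin ℓ) (Fin n) ℝ) (t : ℝ) :
    (segPoly Q Qs).eval t = dFun (Q + t • (Qs - Q)) := by
  have hmap : (Matrix.of fun i j => Polynomial.C (Q i j) +
      Polynomial.X * Polynomial.C (Qs i j - Q i j) :
      Matrix (Fin ℓ) (Fin n) (Polynomial ℝ)).map (Polynomial.evalRingHom t)
        = Q + t • (Qs - Q) := by
    ext i j
    simp [Matrix.add_apply, Matrix.smul_apply, Matrix.sub_apply, smul_eq_mul]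
  rw [segPoly, dFun]
  show (Polynomial.evalRingHom t) _ = _
  rw [map_add]
  rw [RingHom.map_det, RingHom.map_det]
  rw [RingHom.mapMatrix_apply, RingHom.mapMatrix_apply]
  rw [Matrix.map_mul, Matrix.map_mul, Matrix.transpose_map, hmap]

lemma density (x : PairIdx ℓ n → ℝ)
    (hx : (pE x)ᵀ * pQ x = (pQ x)ᵀ * pE x) :
    x ∈ closure ({y : PairIdx ℓ n → ℝ | dFun (pQ y) ≠ 0} ∩
      {y : PairIdx ℓ n → ℝ | (pE y)ᵀ * pQ y = (pQ y)ᵀ * pE y}) := by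
  set E := pE x with hE
  set Q := pQ x with hQ
  obtain ⟨Qs, hQsrank, hQssym⟩ := exists_fullrank_compatible E
  set f : ℝ → (PairIdx ℓ n → ℝ) := fun t => Sum.elim
    (fun p => E p.1 p.2) (fun p => Q p.1 p.2 + t * (Qs p.1 p.2 - Q p.1 p.2)) with hf
  have hfE : ∀ t, pE (f t) = E := fun t => rfl
  have hfQ : ∀ t, pQ (f t) = Q + t • (Qs - Q) := by
    intro t
    ext i j
    simp [pQ, hf, Matrix.add_apply, Matrix.smul_apply, Matrix.sub_apply, smul_eq_mul]
  have hf0 : f 0 = x := by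
    funext i
    rcases i with p | p
    · show E p.1 p.2 = x (Sum.inl p)
      rw [hE]; rfl
    · show Q p.1 p.2 + 0 * (Qs p.1 p.2 - Q p.1 p.2) = x (Sum.inr p)
      rw [hQ]; simp [pQ]
  have hcont : Continuous f := by
    apply continuous_pi
    intro i
    rcases i with p | p
    · exact continuous_const
    · exact continuous_const.add (continuous_id.mul continuous_const)
  have hfV : ∀ t, (pE (f t))ᵀ * pQ (f t) = (pQ (f t))ᵀ * pE (f t) := by
    intro t
    rw [hfE, hfQ]
    rw [Matrix.transpose_add, Matrix.transpose_smul, Matrix.transpose_sub]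
    rw [Matrix.mul_add, Matrix.add_mul, Matrix.mul_smul, Matrix.smul_mul,
      Matrix.mul_sub, Matrix.sub_mul, hx, hQssym]
  have hseg1 : (segPoly Q Qs).eval 1 ≠ 0 := by
    rw [eval_segPoly]
    simp only [one_smul, add_sub_cancel]
    exact (dFun_ne_iff Qs).mpr hQsrank
  have hsegne : segPoly Q Qs ≠ 0 := fun h => hseg1 (by rw [h]; simp)
  have hroots : {t : ℝ | (segPoly Q Qs).IsRoot t}.Finite :=
    Polynomial.finite_setOf_isRoot hsegne
  have hdense : Dense {t : ℝ | (segPoly Q Qs).IsRoot t}ᶜ :=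
    hroots.countable.dense_compl ℝ
  have h0 : (0 : ℝ) ∈ closure {t : ℝ | (segPoly Q Qs).eval t ≠ 0} := hdense 0
  have hmaps : Set.MapsTo f {t : ℝ | (segPoly Q Qs).eval t ≠ 0}
      ({y : PairIdx ℓ n → ℝ | dFun (pQ y) ≠ 0} ∩
        {y : PairIdx ℓ n → ℝ | (pE y)ᵀ * pQ y = (pQ y)ᵀ * pE y}) := by
    intro t ht
    refine ⟨?_, hfV t⟩
    show dFun (pQ (f t)) ≠ 0
    rw [hfQ, ← eval_segPoly]
    exact ht
  have := map_mem_closure hcont h0 hmaps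
  rwa [hf0] at this

lemma half (ℓ n : ℕ) :
    RelGeneric {x : PairIdx ℓ n → ℝ | (pQ x).rank = min ℓ n}
      {x : PairIdx ℓ n → ℝ | (pE x)ᵀ * pQ x = (pQ x)ᵀ * pE x} := by
  refine ⟨{x | MvPolynomial.eval x (Pmv ℓ n) = 0}, ⟨1, fun _ => Pmv ℓ n, ?_⟩, ?_, ?_⟩
  · ext x
    simp
  · rintro x ⟨hs, hv⟩
    refine ⟨?_, hv⟩
    show MvPolynomial.eval x (Pmv ℓ n) = 0
    rw [eval_Pmv]
    by_contra hne
    exact hs ((dFun_ne_iff (pQ x)).mp hne)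
  · intro x hv
    refine closure_mono ?_ (density x hv)
    rintro y ⟨h1, h2⟩
    refine ⟨?_, h2⟩
    show ¬ MvPolynomial.eval y (Pmv ℓ n) = 0
    rw [eval_Pmv]
    exact h1

end FRRG

/-- both `{(E,Q) : rank Q = min ℓ n}` and
`{(E,Q) : rank E = min ℓ n}` are relative generic in
`{(E,Q) : EᵀQ = QᵀE}`. -/
theorem full_rank_relGeneric_in_symmetric_pairs (ℓ n : ℕ) (hℓ : 1 ≤ ℓ) (hn : 1 ≤ n) :
    RelGeneric {x : PairIdx ℓ n → ℝ | (pQ x).rank = min ℓ n}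
      {x : PairIdx ℓ n → ℝ | (pE x)ᵀ * pQ x = (pQ x)ᵀ * pE x} ∧
    RelGeneric {x : PairIdx ℓ n → ℝ | (pE x).rank = min ℓ n}
      {x : PairIdx ℓ n → ℝ | (pE x)ᵀ * pQ x = (pQ x)ᵀ * pE x} := by
  refine ⟨FRRG.half ℓ n, ?_⟩
  set V : Set (PairIdx ℓ n → ℝ) :=
    {x | (pE x)ᵀ * pQ x = (pQ x)ᵀ * pE x} with hVdef
  obtain ⟨W, ⟨k, p, hWdef⟩, hsub, hdens⟩ := FRRG.half ℓ n
  set σ : (PairIdx ℓ n → ℝ) → (PairIdx ℓ n → ℝ) := fun x => x ∘ Sum.swap with hσ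
  have hσσ : ∀ x, σ (σ x) = x := by
    intro x; funext i; show x (Sum.swap (Sum.swap i)) = x i; rw [Sum.swap_swap]
  have hpE : ∀ x, pE (σ x) = pQ x := fun x => rfl
  have hpQ : ∀ x, pQ (σ x) = pE x := fun x => rfl
  have hσcont : Continuous σ := continuous_pi fun i => continuous_apply _
  have hσV : ∀ x, x ∈ V → σ x ∈ V := by
    intro x hx
    show (pE (σ x))ᵀ * pQ (σ x) = (pQ (σ x))ᵀ * pE (σ x)
    rw [hpE, hpQ]
    exact hx.symm
  refine ⟨σ ⁻¹' W, ⟨k, fun i => MvPolynomial.rename Sum.swap (p i), ?_⟩, ?_, ?_⟩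
  · ext x
    constructor
    · intro hx i
      rw [MvPolynomial.eval_rename]
      have : σ x ∈ W := hx
      rw [hWdef] at this
      exact this i
    · intro hx
      show σ x ∈ W
      rw [hWdef]
      intro i
      have := hx i
      rwa [MvPolynomial.eval_rename] at this
  · rintro x ⟨hs, hv⟩
    refine ⟨?_, hv⟩
    have h1 : σ x ∈ {y : PairIdx ℓ n → ℝ | (pQ y).rank = min ℓ n}ᶜ ∩ V := by
      refine ⟨?_, hσV x hv⟩
      show ¬ (pQ (σ x)).rank = min ℓ n
      rw [hpQ]
      exact hs
    exact (hsub h1).1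
  · intro x hv
    have h1 : σ x ∈ closure (Wᶜ ∩ V) := hdens (hσV x hv)
    have hmaps : Set.MapsTo σ (Wᶜ ∩ V) ((σ ⁻¹' W)ᶜ ∩ V) := by
      rintro y ⟨hy1, hy2⟩
      refine ⟨?_, hσV y hy2⟩
      show ¬ σ (σ y) ∈ W
      rw [hσσ]
      exact hy1
    have := map_mem_closure hσcont h1 hmaps
    rwa [hσσ] at this
end

section
/- Let ℓ, n ∈ ℕ, ℓ, n ≥ 1. The set S = {(E,Q) ∈ ℝ^{ℓ×n} × ℝ^{ℓ×n} : rank(EᵀQ) = min{ℓ,n}} is relative generic in V = {(E,Q) ∈ ℝ^{ℓ×n} × ℝ^{ℓ×n} : EᵀQ = QᵀE}. -/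
open Matrix

section AuxLemmas

open Matrix Submodule

-- rank of arbitrary submatrix
lemma aux_rank_submatrix_le' {p q r t : ℕ} (A : Matrix (Fin p) (Fin q) ℝ)
    (f : Fin r → Fin p) (g : Fin t → Fin q) :
    (A.submatrix f g).rank ≤ A.rank := by
  classical
  have h1 : A.submatrix f g =
      (Matrix.of fun (i : Fin r) (a : Fin p) => if a = f i then (1:ℝ) else 0) * A *
        (Matrix.of fun (a : Fin q) (j : Fin t) => if a = g j then (1:ℝ) else 0) := by
    ext i j
    rw [Matrix.mul_apply]
    have hinner : ∀ a : Fin q,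
        ((Matrix.of fun (i : Fin r) (a : Fin p) => if a = f i then (1:ℝ) else 0) * A) i a
          = A (f i) a := by
      intro a
      rw [Matrix.mul_apply]
      simp [Finset.sum_ite_eq]
    simp only [hinner]
    simp [Finset.sum_ite_eq', Matrix.submatrix_apply]
  rw [h1]
  exact le_trans (Matrix.rank_mul_le_left _ _) (Matrix.rank_mul_le_right _ _)

lemma aux_rank_eq_card_iff_det {m : ℕ} (A : Matrix (Fin m) (Fin m) ℝ) :
    A.rank = m ↔ A.det ≠ 0 := by
  constructor
  · intro h hdet
    obtain ⟨v, hv, hv0⟩ := (Matrix.exists_mulVec_eq_zero_iff).2 hdet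
    have hker : v ∈ LinearMap.ker A.mulVecLin := by simpa [Matrix.mulVecLin_apply] using hv0
    have h1 := LinearMap.finrank_range_add_finrank_ker A.mulVecLin
    rw [Matrix.rank] at h
    have h3 : Module.finrank ℝ (Fin m → ℝ) = m := by simp
    have h2 : Module.finrank ℝ (LinearMap.ker A.mulVecLin) = 0 := by omega
    have hb : LinearMap.ker A.mulVecLin = ⊥ := Submodule.finrank_eq_zero.mp h2
    rw [hb] at hker
    exact hv (by simpa using hker)
  · intro hdet
    have h := Matrix.rank_of_isUnit A ((Matrix.isUnit_iff_isUnit_det A).2 (isUnit_iff_ne_zero.2 hdet))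
    simpa using h

lemma aux_exists_minor {l n m : ℕ} (G : Matrix (Fin l) (Fin n) ℝ) (hG : G.rank = m) :
    ∃ s : Fin m → Fin n, ((Gᵀ * G).submatrix s s).det ≠ 0 := by
  classical
  obtain ⟨b, hbsub, hbspan, hbli⟩ := exists_linearIndependent ℝ (Set.range Gᵀ)
  have hbfin : b.Finite := (Set.finite_range Gᵀ).subset hbsub
  haveI : Fintype b := hbfin.fintype
  have hcard : b.toFinset.card = m := by
    have h1 : Module.finrank ℝ (span ℝ b) = b.toFinset.card :=
      finrank_span_set_eq_card hbli
    have h2 : G.rank = Module.finrank ℝ (span ℝ (Set.range Gᵀ)) :=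
      Matrix.rank_eq_finrank_span_cols G
    rw [← hbspan] at h2
    omega
  have hcard' : Fintype.card b = m := by rwa [Set.toFinset_card] at hcard
  have e : Fin m ≃ b := (Fintype.equivFinOfCardEq hcard').symm
  -- choose column indices
  have hsel : ∀ i : Fin m, ∃ j : Fin n, Gᵀ j = (e i).val := fun i => hbsub (e i).2
  choose s hs using hsel
  refine ⟨s, ?_⟩
  -- columns of G at s are linearly independent
  have hli : LinearIndependent ℝ (fun i : Fin m => Gᵀ (s i)) := by
    have : (fun i : Fin m => Gᵀ (s i)) = (fun x : b => (x : Fin l → ℝ)) ∘ e := by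
      funext i; simp [hs i]
    rw [this]
    exact hbli.comp e e.injective
  -- rank of the column-selected matrix
  have hsub : (G.submatrix id s)ᵀ = Matrix.of fun i a => Gᵀ (s i) a := by
    ext i a; rfl
  have hrank1 : (G.submatrix id s).rank = m := by
    rw [Matrix.rank_eq_finrank_span_cols,
      show (G.submatrix id s).col = fun i => Gᵀ (s i) from by ext i a; rfl]
    have := finrank_span_eq_card (R := ℝ) hli
    simpa using this
  have hmul : (G.submatrix id s)ᵀ * (G.submatrix id s) = (Gᵀ * G).submatrix s s := by
    ext i j
    simp [Matrix.mul_apply]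
  have hr2 : ((Gᵀ * G).submatrix s s).rank = m := by
    rw [← hmul, Matrix.rank_transpose_mul_self]; exact hrank1
  exact (aux_rank_eq_card_iff_det _).1 hr2

-- step matrix and its properties
noncomputable def stepT (a b : ℕ) : (Fin a → ℝ) →ₗ[ℝ] (Fin b → ℝ) :=
  (Matrix.of fun (i : Fin b) (j : Fin a) => if (i : ℕ) = (j : ℕ) then (1:ℝ) else 0).mulVecLin

lemma stepT_apply {a b : ℕ} (x : Fin a → ℝ) (i : Fin b) :
    stepT a b x i = if h : (i : ℕ) < a then x ⟨i, h⟩ else 0 := by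
  simp only [stepT, Matrix.mulVecLin_apply, Matrix.mulVec, dotProduct, Matrix.of_apply]
  by_cases h : (i : ℕ) < a
  · rw [dif_pos h]
    rw [Finset.sum_eq_single (⟨(i : ℕ), h⟩ : Fin a)]
    · simp
    · intro j _ hj
      rw [if_neg, zero_mul]
      intro hij
      exact hj (by ext; simp [hij.symm])
    · simp
  · rw [dif_neg h]
    apply Finset.sum_eq_zero
    intro j _
    rw [if_neg, zero_mul]
    intro hij
    exact h (hij ▸ j.2)

lemma stepT_injective {a b : ℕ} (hab : a ≤ b) : Function.Injective (stepT a b) := by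
  intro x y hxy
  funext j
  have := congrFun hxy ⟨(j : ℕ), lt_of_lt_of_le j.2 hab⟩
  rw [stepT_apply, stepT_apply] at this
  simpa [j.2] using this

lemma stepT_surjective {a b : ℕ} (hba : b ≤ a) : Function.Surjective (stepT a b) := by
  intro y
  refine ⟨fun j => if h : (j : ℕ) < b then y ⟨j, h⟩ else 0, ?_⟩
  funext i
  rw [stepT_apply]
  have hia : (i : ℕ) < a := lt_of_lt_of_le i.2 hba
  rw [dif_pos hia, dif_pos i.2]

lemma aux_exists_G {l n : ℕ} (M : Matrix (Fin l) (Fin n) ℝ) :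
    ∃ G : Matrix (Fin l) (Fin n) ℝ, Gᵀ * M = Mᵀ * G ∧ G.rank = min l n := by
  classical
  set U : Submodule ℝ (Fin n → ℝ) := LinearMap.ker M.mulVecLin with hU
  set V' : Submodule ℝ (Fin l → ℝ) := LinearMap.ker Mᵀ.mulVecLin with hV'
  have hkl : M.rank ≤ l := M.rank_le_height
  have hkn : M.rank ≤ n := M.rank_le_width
  have hUdim : Module.finrank ℝ U = n - M.rank := by
    have h1 := LinearMap.finrank_range_add_finrank_ker M.mulVecLin
    rw [← Matrix.rank, (show Module.finrank ℝ (Fin n → ℝ) = n by simp)] at h1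
    rw [hU]
    omega
  have hVdim : Module.finrank ℝ V' = l - M.rank := by
    have h1 := LinearMap.finrank_range_add_finrank_ker Mᵀ.mulVecLin
    rw [← Matrix.rank, (show Module.finrank ℝ (Fin l → ℝ) = l by simp), M.rank_transpose] at h1
    rw [hV']
    omega
  -- projection onto U
  obtain ⟨U', hU'⟩ := U.exists_isCompl
  set π : (Fin n → ℝ) →ₗ[ℝ] U := U.linearProjOfIsCompl U' hU' with hπ
  -- the maximal rank map J : U → V'
  set eU := (Module.finBasis ℝ U).equivFun with heU
  set eV := (Module.finBasis ℝ V').equivFun with heV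
  set J : U →ₗ[ℝ] V' :=
    (eV.symm : (Fin (Module.finrank ℝ V') → ℝ) →ₗ[ℝ] V') ∘ₗ
      (stepT (Module.finrank ℝ U) (Module.finrank ℝ V')) ∘ₗ
      (eU : U →ₗ[ℝ] (Fin (Module.finrank ℝ U) → ℝ)) with hJ
  set N : (Fin n → ℝ) →ₗ[ℝ] (Fin l → ℝ) := V'.subtype ∘ₗ J ∘ₗ π with hN
  set G₂ : Matrix (Fin l) (Fin n) ℝ := LinearMap.toMatrix' N with hG₂
  have hG₂mulVec : ∀ x, G₂ *ᵥ x = N x := by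
    intro x
    rw [hG₂, ← Matrix.toLin'_apply, Matrix.toLin'_toMatrix']
  set G : Matrix (Fin l) (Fin n) ℝ := M + G₂ with hG
  -- symmetry
  have hMtG₂ : Mᵀ * G₂ = 0 := by
    ext i j
    have hcol : (fun a => G₂ a j) = N (Pi.single j 1) := by
      rw [← hG₂mulVec]
      funext a'
      simp [Matrix.mulVec_single]
    have hmem : N (Pi.single j 1) ∈ V' := (J (π (Pi.single j 1))).2
    have : Mᵀ *ᵥ (fun a => G₂ a j) = 0 := by
      rw [hcol]
      exact hmem
    calc (Mᵀ * G₂) i j = (Mᵀ *ᵥ fun a => G₂ a j) i := by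
          simp [Matrix.mul_apply, Matrix.mulVec, dotProduct]
      _ = 0 := by rw [this]; rfl
  have hsym : Gᵀ * M = Mᵀ * G := by
    rw [hG, Matrix.transpose_add, Matrix.add_mul, Matrix.mul_add]
    have h1 : G₂ᵀ * M = (Mᵀ * G₂)ᵀ := by rw [Matrix.transpose_mul, Matrix.transpose_transpose]
    rw [h1, hMtG₂, Matrix.transpose_zero]
  refine ⟨G, hsym, ?_⟩
  -- rank
  have hGmulVec : ∀ x, G *ᵥ x = M *ᵥ x + N x := by
    intro x; rw [hG, Matrix.add_mulVec, hG₂mulVec]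
  have hNmem : ∀ x, N x ∈ V' := fun x => (J (π x)).2
  have hMtN : ∀ x, Mᵀ *ᵥ N x = 0 := by
    intro x
    have h := hNmem x
    rw [hV', LinearMap.mem_ker] at h
    rw [← Matrix.mulVecLin_apply]
    exact h
  rcases le_total n l with hnl | hln
  · -- injective case : rank G = n
    have hmin : min l n = n := min_eq_right hnl
    have hab : Module.finrank ℝ U ≤ Module.finrank ℝ V' := by omega
    have hJinj : Function.Injective J := by
      rw [hJ]
      intro u v huv
      simp only [LinearMap.coe_comp, Function.comp_apply, LinearEquiv.coe_coe] at huv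
      exact eU.injective (stepT_injective hab (eV.symm.injective huv))
    have hker : LinearMap.ker G.mulVecLin = ⊥ := by
      rw [Submodule.eq_bot_iff]
      intro x hx
      have hx' : M *ᵥ x + N x = 0 := by
        rw [← hGmulVec]
        simpa [Matrix.mulVecLin_apply] using hx
      have h5 : M *ᵥ x = -(N x) := eq_neg_of_add_eq_zero_left hx'
      have hMx : M *ᵥ x = 0 := by
        have hdot : (M *ᵥ x) ⬝ᵥ (M *ᵥ x) = 0 := by
          nth_rewrite 1 [h5]
          rw [neg_dotProduct, dotProduct_mulVec, ← Matrix.mulVec_transpose, hMtN,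
            zero_dotProduct, neg_zero]
        exact dotProduct_self_eq_zero.mp hdot
      have hNx : N x = 0 := by rw [hMx, zero_add] at hx'; exact hx'
      have hxU : x ∈ U := by
        rw [hU]
        simpa [Matrix.mulVecLin_apply] using hMx
      have hπx : π x = ⟨x, hxU⟩ := Submodule.linearProjOfIsCompl_apply_left hU' ⟨x, hxU⟩
      have hJ0 : J ⟨x, hxU⟩ = 0 := by
        apply Subtype.ext
        have : N x = (J (π x) : Fin l → ℝ) := rfl
        rw [hπx] at this
        rw [← this, hNx]; rfl
      have hx0 : (⟨x, hxU⟩ : U) = 0 := hJinj (by rw [hJ0, map_zero])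
      simpa using congrArg Subtype.val hx0
    have h1 := LinearMap.finrank_range_add_finrank_ker G.mulVecLin
    rw [hker, finrank_bot, add_zero, (show Module.finrank ℝ (Fin n → ℝ) = n by simp)] at h1
    rw [hmin, Matrix.rank]
    exact h1
  · -- surjective case : rank G = l
    have hmin : min l n = l := min_eq_left hln
    have hba : Module.finrank ℝ V' ≤ Module.finrank ℝ U := by omega
    have hJsurj : Function.Surjective J := by
      rw [hJ]
      intro v
      obtain ⟨y, hy⟩ := stepT_surjective hba (eV (v))
      exact ⟨eU.symm y, by simp [hy]⟩
    have hMπ : ∀ x : U, M *ᵥ (x : Fin n → ℝ) = 0 := by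
      intro x
      have h : (x : Fin n → ℝ) ∈ LinearMap.ker M.mulVecLin := x.2
      rw [LinearMap.mem_ker] at h
      rw [← Matrix.mulVecLin_apply]
      exact h
    have hsup : LinearMap.range M.mulVecLin ⊔ V' ≤ LinearMap.range G.mulVecLin := by
      apply sup_le
      · rintro y ⟨x, rfl⟩
        refine ⟨x - (π x : Fin n → ℝ), ?_⟩
        have hπz : π (x - (π x : Fin n → ℝ)) = 0 := by
          rw [map_sub, show π (π x : Fin n → ℝ) = π x from
            Submodule.linearProjOfIsCompl_apply_left hU' (π x), sub_self]
        have : G *ᵥ (x - (π x : Fin n → ℝ)) = M *ᵥ x + N (x - (π x : Fin n → ℝ)) := by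
          rw [hGmulVec, Matrix.mulVec_sub, hMπ (π x), sub_zero]
        rw [Matrix.mulVecLin_apply, this, hN]
        simp [hπz]
      · intro v hv
        obtain ⟨u, hu⟩ := hJsurj ⟨v, hv⟩
        refine ⟨(u : Fin n → ℝ), ?_⟩
        have hπu : π (u : Fin n → ℝ) = u := Submodule.linearProjOfIsCompl_apply_left hU' u
        rw [Matrix.mulVecLin_apply, hGmulVec, hMπ u, zero_add, hN]
        simp only [LinearMap.coe_comp, Function.comp_apply, Submodule.coe_subtype, hπu, hu]
    have hinf : LinearMap.range M.mulVecLin ⊓ V' = ⊥ := by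
      rw [Submodule.eq_bot_iff]
      rintro y hy
      obtain ⟨h1, h2⟩ := Submodule.mem_inf.mp hy
      obtain ⟨x, rfl⟩ := h1
      have h2 : M.mulVecLin x ∈ LinearMap.ker Mᵀ.mulVecLin := h2
      rw [LinearMap.mem_ker] at h2
      rw [Matrix.mulVecLin_apply] at h2
      rw [Matrix.mulVecLin_apply] at h2 ⊢
      have hdot : (M *ᵥ x) ⬝ᵥ (M *ᵥ x) = 0 := by
        rw [dotProduct_mulVec, ← Matrix.mulVec_transpose, h2, zero_dotProduct]
      exact dotProduct_self_eq_zero.mp hdot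
    have hdims := Submodule.finrank_sup_add_finrank_inf_eq (LinearMap.range M.mulVecLin) V'
    rw [hinf, finrank_bot, add_zero] at hdims
    have hrange : Module.finrank ℝ (LinearMap.range M.mulVecLin) = M.rank := rfl
    have hsupdim : Module.finrank ℝ ((LinearMap.range M.mulVecLin) ⊔ V' : Submodule ℝ (Fin l → ℝ)) = l := by
      rw [hdims, hrange, hVdim]
      omega
    have hge : l ≤ G.rank := by
      rw [Matrix.rank]
      calc l = Module.finrank ℝ ((LinearMap.range M.mulVecLin) ⊔ V' : Submodule ℝ (Fin l → ℝ)) := hsupdim.symm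
        _ ≤ Module.finrank ℝ (LinearMap.range G.mulVecLin) := Submodule.finrank_mono hsup
    have hle : G.rank ≤ l := G.rank_le_height
    omega

noncomputable def polyEntry {ℓ n : ℕ} (i j : Fin n) : MvPolynomial (PairIdx ℓ n) ℝ :=
  ∑ a : Fin ℓ, MvPolynomial.X (Sum.inl (a, i)) * MvPolynomial.X (Sum.inr (a, j))

lemma polyEntry_eval {ℓ n : ℕ} (x : PairIdx ℓ n → ℝ) (i j : Fin n) :
    MvPolynomial.eval x (polyEntry i j) = ((pE x)ᵀ * pQ x) i j := by
  rw [polyEntry, map_sum, Matrix.mul_apply]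
  apply Finset.sum_congr rfl
  intro a _
  simp [pE, pQ]

noncomputable def minorPoly {ℓ n : ℕ} (m : ℕ) (f g : Fin m → Fin n) :
    MvPolynomial (PairIdx ℓ n) ℝ :=
  (Matrix.of fun i j => polyEntry (ℓ := ℓ) (f i) (g j)).det

lemma minorPoly_eval {ℓ n m : ℕ} (x : PairIdx ℓ n → ℝ) (f g : Fin m → Fin n) :
    MvPolynomial.eval x (minorPoly m f g) = (((pE x)ᵀ * pQ x).submatrix f g).det := by
  rw [minorPoly, RingHom.map_det]
  congr 1
  ext i j
  simp [Matrix.map_apply, polyEntry_eval, Matrix.submatrix_apply]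

lemma aux_det_eval {m : ℕ} (t : ℝ) (B : Matrix (Fin m) (Fin m) (Polynomial ℝ)) :
    Polynomial.eval t B.det = (B.map (fun r => Polynomial.eval t r)).det := by
  have h := RingHom.map_det (Polynomial.evalRingHom t) B
  simpa [Polynomial.coe_evalRingHom] using h

end AuxLemmas

/-- `{(E,Q) : rank (EᵀQ) = min ℓ n}` is relative generic in
`{(E,Q) : EᵀQ = QᵀE}`. -/
theorem rank_EtQ_relGeneric_in_symmetric_pairs (ℓ n : ℕ) (hℓ : 1 ≤ ℓ) (hn : 1 ≤ n) :
    RelGeneric {x : PairIdx ℓ n → ℝ | ((pE x)ᵀ * pQ x).rank = min ℓ n}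
      {x : PairIdx ℓ n → ℝ | (pE x)ᵀ * pQ x = (pQ x)ᵀ * pE x} := by
  classical
  set m := min ℓ n with hm
  -- the algebraic set of vanishing m×m minors
  refine ⟨{x | ∀ fg : (Fin m → Fin n) × (Fin m → Fin n),
      MvPolynomial.eval x (minorPoly m fg.1 fg.2) = 0}, ?_, ?_, ?_⟩
  · -- IsAlgebraicSet
    refine ⟨Fintype.card ((Fin m → Fin n) × (Fin m → Fin n)),
      fun i => minorPoly m ((Fintype.equivFin _).symm i).1 ((Fintype.equivFin _).symm i).2, ?_⟩
    ext x
    constructor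
    · intro h i
      exact h _
    · intro h fg
      have := h (Fintype.equivFin _ fg)
      simpa using this
  · -- inclusion
    rintro x ⟨hxS, hxV⟩
    refine ⟨?_, hxV⟩
    intro fg
    rw [minorPoly_eval]
    set B := (pE x)ᵀ * pQ x with hB
    have hrle : B.rank ≤ m := by
      have h1 : B.rank ≤ (pE x)ᵀ.rank := Matrix.rank_mul_le_left _ _
      have h2 : B.rank ≤ (pQ x).rank := Matrix.rank_mul_le_right _ _
      have h3 : (pE x)ᵀ.rank ≤ ℓ := (pE x)ᵀ.rank_le_width
      have h4 : (pQ x).rank ≤ n := (pQ x).rank_le_width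
      exact le_min (le_trans h1 h3) (le_trans h2 h4)
    have hrlt : B.rank < m := lt_of_le_of_ne hrle hxS
    by_contra hdet
    have := (aux_rank_eq_card_iff_det _).2 hdet
    have hle := aux_rank_submatrix_le' B fg.1 fg.2
    omega
  · -- density
    intro x hxV
    have hsymm : (pE x)ᵀ * pQ x = (pQ x)ᵀ * pE x := hxV
    set E := pE x with hE
    set Q := pQ x with hQ
    obtain ⟨G, hGsym, hGrank⟩ := aux_exists_G (E - Q)
    obtain ⟨s, hs⟩ := aux_exists_minor G hGrank
    -- the perturbation polynomial
    set M₁ := Eᵀ * G + Gᵀ * Q with hM₁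
    set H := Eᵀ * Q with hH
    set A := Gᵀ * G with hA
    set p : Polynomial ℝ := (Matrix.of fun i j : Fin m =>
      Polynomial.C (H (s i) (s j)) + Polynomial.X * Polynomial.C (M₁ (s i) (s j)) +
        Polynomial.X ^ 2 * Polynomial.C (A (s i) (s j))).det with hp
    set q : Polynomial ℝ := (Matrix.of fun i j : Fin m =>
      Polynomial.C (A (s i) (s j)) + Polynomial.X * Polynomial.C (M₁ (s i) (s j)) +
        Polynomial.X ^ 2 * Polynomial.C (H (s i) (s j))).det with hq
    -- key matrix identity
    have hpert : ∀ t : ℝ, (E + t • G)ᵀ * (Q + t • G) = H + t • M₁ + (t * t) • A := by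
      intro t
      simp only [Matrix.transpose_add, Matrix.transpose_smul, Matrix.add_mul, Matrix.mul_add,
        Matrix.smul_mul, Matrix.mul_smul, smul_smul, smul_add, hH, hM₁, hA]
      abel
    -- symmetry of perturbed pair
    have hsymt : ∀ t : ℝ, (E + t • G)ᵀ * (Q + t • G) = (Q + t • G)ᵀ * (E + t • G) := by
      intro t
      have hkey : Eᵀ * G + Gᵀ * Q = Qᵀ * G + Gᵀ * E := by
        have h1 : Gᵀ * E - Gᵀ * Q = Eᵀ * G - Qᵀ * G := by
          have := hGsym
          rw [Matrix.mul_sub, Matrix.transpose_sub, Matrix.sub_mul] at this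
          exact this
        have h2 := sub_eq_sub_iff_add_eq_add.mp h1
        -- h2 : Gᵀ * E + Qᵀ * G = Eᵀ * G + Gᵀ * Q
        rw [← h2]
        abel
      have hQE : (Q + t • G)ᵀ * (E + t • G) = Qᵀ * E + t • (Qᵀ * G + Gᵀ * E) + (t * t) • A := by
        simp only [Matrix.transpose_add, Matrix.transpose_smul, Matrix.add_mul, Matrix.mul_add,
          Matrix.smul_mul, Matrix.mul_smul, smul_smul, smul_add, hA]
        abel
      rw [hpert t, hQE, ← hsymm, ← hkey, hH]
    -- evaluation of p
    have hpeval : ∀ t : ℝ, p.eval t = (((E + t • G)ᵀ * (Q + t • G)).submatrix s s).det := by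
      intro t
      rw [hpert t, hp, aux_det_eval]
      congr 1
      ext i j
      simp [Matrix.map_apply, Matrix.submatrix_apply, Matrix.add_apply, Matrix.smul_apply,
        smul_eq_mul]
      ring
    -- q at 0
    have hq0 : q.eval 0 = ((Gᵀ * G).submatrix s s).det := by
      rw [hq, aux_det_eval]
      congr 1
      ext i j
      simp [Matrix.map_apply, Matrix.submatrix_apply, hA]
    have hqne : q ≠ 0 := by
      intro h0
      rw [h0] at hq0
      simp at hq0
      exact hs hq0.symm
    -- relation p(t) = t^(2m) q(1/t)
    have hrel : ∀ t : ℝ, t ≠ 0 → p.eval t = t ^ (2 * m) * q.eval t⁻¹ := by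
      intro t ht
      have hqe : q.eval t⁻¹ = ((A.submatrix s s) + t⁻¹ • (M₁.submatrix s s) +
          (t⁻¹ * t⁻¹) • (H.submatrix s s)).det := by
        rw [hq, aux_det_eval]
        congr 1
        ext i j
        simp [Matrix.map_apply, Matrix.submatrix_apply, Matrix.add_apply, Matrix.smul_apply,
          smul_eq_mul]
        ring
      have hpe : p.eval t = ((H.submatrix s s) + t • (M₁.submatrix s s) +
          (t * t) • (A.submatrix s s)).det := by
        rw [hp, aux_det_eval]
        congr 1
        ext i j
        simp [Matrix.map_apply, Matrix.submatrix_apply, Matrix.add_apply, Matrix.smul_apply,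
          smul_eq_mul]
        ring
      rw [hpe, hqe]
      have hmatid : (t * t) • ((A.submatrix s s) + t⁻¹ • (M₁.submatrix s s) +
          (t⁻¹ * t⁻¹) • (H.submatrix s s)) = (H.submatrix s s) + t • (M₁.submatrix s s) +
          (t * t) • (A.submatrix s s) := by
        rw [smul_add, smul_add, smul_smul, smul_smul]
        have e1 : t * t * t⁻¹ = t := by field_simp
        have e2 : t * t * (t⁻¹ * t⁻¹) = 1 := by field_simp
        rw [e1, e2, one_smul]
        abel
      rw [← hmatid, Matrix.det_smul, Fintype.card_fin]
      congr 1
      rw [show t * t = t ^ 2 by ring, ← pow_mul]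
    have hpne : p ≠ 0 := by
      -- find u ≠ 0 with q.eval u ≠ 0
      have hroots : {u : ℝ | q.IsRoot u}.Finite := Polynomial.finite_setOf_isRoot hqne
      have hinf : (Set.Ioi (0:ℝ)).Infinite := Set.Ioi_infinite 0
      obtain ⟨u, hu⟩ := (hinf.diff hroots).nonempty
      have hu0 : 0 < u := hu.1
      have huq : q.eval u ≠ 0 := hu.2
      intro h0
      have := hrel u⁻¹ (by positivity)
      rw [h0] at this
      simp only [Polynomial.eval_zero] at this
      rw [inv_inv] at this
      have : (u⁻¹) ^ (2 * m) * q.eval u = 0 := this.symm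
      rcases mul_eq_zero.mp this with h | h
      · exact (pow_ne_zero _ (by positivity)) h
      · exact huq h
    -- now the metric argument
    rw [Metric.mem_closure_iff]
    intro ε hε
    set C : ℝ := 1 + ∑ i : Fin ℓ, ∑ j : Fin n, |G i j| with hC
    have hCpos : 0 < C := by
      have : (0:ℝ) ≤ ∑ i : Fin ℓ, ∑ j : Fin n, |G i j| :=
        Finset.sum_nonneg fun i _ => Finset.sum_nonneg fun j _ => abs_nonneg _
      linarith
    have hGbound : ∀ i j, |G i j| ≤ C := by
      intro i j
      have h1 : |G i j| ≤ ∑ j' : Fin n, |G i j'| :=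
        Finset.single_le_sum (f := fun j' => |G i j'|) (fun j' _ => abs_nonneg _)
          (Finset.mem_univ j)
      have h2 : (∑ j' : Fin n, |G i j'|) ≤ ∑ i' : Fin ℓ, ∑ j' : Fin n, |G i' j'| :=
        Finset.single_le_sum (f := fun i' => ∑ j' : Fin n, |G i' j'|)
          (fun i' _ => Finset.sum_nonneg fun j' _ => abs_nonneg _) (Finset.mem_univ i)
      linarith
    set δ := ε / C with hδ
    have hδpos : 0 < δ := div_pos hε hCpos
    have hroots : {u : ℝ | p.IsRoot u}.Finite := Polynomial.finite_setOf_isRoot hpne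
    obtain ⟨t, ht⟩ := ((Set.Ioo_infinite hδpos).diff hroots).nonempty
    have ht0 : 0 < t := ht.1.1
    have htδ : t < δ := ht.1.2
    have htp : p.eval t ≠ 0 := ht.2
    -- the perturbed point
    set y : PairIdx ℓ n → ℝ := fun idx => match idx with
      | Sum.inl (i, j) => E i j + t * G i j
      | Sum.inr (i, j) => Q i j + t * G i j with hy
    have hyE : pE y = E + t • G := by
      ext i j
      simp [pE, hy, Matrix.add_apply, Matrix.smul_apply, smul_eq_mul]
    have hyQ : pQ y = Q + t • G := by
      ext i j
      simp [pQ, hy, Matrix.add_apply, Matrix.smul_apply, smul_eq_mul]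
    refine ⟨y, ⟨?_, ?_⟩, ?_⟩
    · -- y ∈ Wᶜ
      intro hall
      have := hall (s, s)
      rw [minorPoly_eval, hyE, hyQ] at this
      rw [hpeval t] at htp
      exact htp this
    · -- y ∈ V
      show (pE y)ᵀ * pQ y = (pQ y)ᵀ * pE y
      rw [hyE, hyQ]
      exact hsymt t
    · -- distance
      rw [dist_comm, dist_pi_lt_iff hε]
      intro idx
      have key : ∀ (c g : ℝ), |g| ≤ C → dist (c + t * g) c < ε := by
        intro c g hg
        rw [Real.dist_eq]
        have h9 : c + t * g - c = t * g := by ring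
        rw [h9, abs_mul, abs_of_pos ht0]
        calc t * |g| ≤ t * C := by
              apply mul_le_mul_of_nonneg_left hg (le_of_lt ht0)
          _ < δ * C := by apply mul_lt_mul_of_pos_right htδ hCpos
          _ = ε := by rw [hδ]; field_simp
      match idx with
      | Sum.inl (i, j) => exact key (x (Sum.inl (i, j))) (G i j) (hGbound i j)
      | Sum.inr (i, j) => exact key (x (Sum.inr (i, j))) (G i j) (hGbound i j)
end

section
/- Let ℓ, n ∈ ℕ, ℓ, n ≥ 1, and let Q ∈ ℝ^{ℓ×n} be fixed. The set S = {E ∈ ℝ^{ℓ×n} : rank E = min{ℓ,n}} is relative generic in V_Q = {E ∈ ℝ^{ℓ×n} : EᵀQ = QᵀE and EᵀQ is positive semidefinite}. -/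
open Matrix

/-- The matrix associated to a point of `ℝ^{ℓ×n}` (identification via entries). -/
def toMat {ℓ n : ℕ} (x : Fin ℓ × Fin n → ℝ) : Matrix (Fin ℓ) (Fin n) ℝ :=
  Matrix.of fun i j => x (i, j)

namespace FRRGaux

open Matrix Module Filter Set

variable {k ℓ n : ℕ}

/-- A square real matrix of full rank is a unit. -/
lemma isUnit_of_rank_eq {M : Matrix (Fin k) (Fin k) ℝ} (h : M.rank = k) : IsUnit M := by
  have hrange : LinearMap.range M.mulVecLin = ⊤ := by
    apply Submodule.eq_top_of_finrank_eq
    rw [show finrank ℝ (LinearMap.range M.mulVecLin) = M.rank from rfl, h,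
      Module.finrank_fintype_fun_eq_card, Fintype.card_fin]
  have hsurj : Function.Surjective M.mulVecLin := LinearMap.range_eq_top.mp hrange
  choose c hc using hsurj
  let N : Matrix (Fin k) (Fin k) ℝ := Matrix.of fun i j => c (Pi.single j 1) i
  have hMN : M * N = 1 := by
    ext i j
    have h1 : (M * N) i j = (M *ᵥ c (Pi.single j 1)) i := by
      simp [Matrix.mul_apply, Matrix.mulVec, dotProduct, N]
    rw [h1, show M *ᵥ c (Pi.single j 1) = M.mulVecLin (c (Pi.single j 1)) from rfl,
      hc (Pi.single j 1), Pi.single_apply, Matrix.one_apply]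
  exact (Matrix.isUnit_iff_isUnit_det M).mpr (Matrix.isUnit_det_of_right_inverse hMN)

lemma det_ne_zero_of_rank_eq {M : Matrix (Fin k) (Fin k) ℝ} (h : M.rank = k) : M.det ≠ 0 :=
  ((Matrix.isUnit_iff_isUnit_det M).mp (isUnit_of_rank_eq h)).ne_zero

lemma rank_eq_of_det_ne_zero {M : Matrix (Fin k) (Fin k) ℝ} (h : M.det ≠ 0) : M.rank = k := by
  have := Matrix.rank_of_isUnit M ((Matrix.isUnit_iff_isUnit_det M).mpr (isUnit_iff_ne_zero.mpr h))
  simpa using this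

/-- the full-rank detector polynomial function -/
noncomputable def phi (E : Matrix (Fin ℓ) (Fin n) ℝ) : ℝ :=
  (E * Eᵀ).det ^ 2 + (Eᵀ * E).det ^ 2

lemma phi_ne_zero_iff (E : Matrix (Fin ℓ) (Fin n) ℝ) : phi E ≠ 0 ↔ E.rank = min ℓ n := by
  have hle1 : E.rank ≤ ℓ := by simpa using E.rank_le_card_height
  have hle2 : E.rank ≤ n := by simpa using E.rank_le_card_width
  constructor
  · intro h
    by_cases h1 : (E * Eᵀ).det = 0
    · have h2 : (Eᵀ * E).det ≠ 0 := by
        intro h2; exact h (by simp [phi, h1, h2])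
      have h3 : (Eᵀ * E).rank = n := rank_eq_of_det_ne_zero h2
      rw [Matrix.rank_transpose_mul_self] at h3
      omega
    · have h3 : (E * Eᵀ).rank = ℓ := rank_eq_of_det_ne_zero h1
      rw [Matrix.rank_self_mul_transpose] at h3
      omega
  · intro h
    rcases le_total ℓ n with hln | hln
    · have h1 : (E * Eᵀ).rank = ℓ := by rw [Matrix.rank_self_mul_transpose, h]; omega
      have h2 := det_ne_zero_of_rank_eq h1
      intro hc
      obtain ⟨ha, -⟩ := (add_eq_zero_iff_of_nonneg (sq_nonneg _) (sq_nonneg _)).mp hc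
      exact h2 (by simpa using pow_eq_zero_iff (n := 2) (by norm_num) |>.mp ha)
    · have h1 : (Eᵀ * E).rank = n := by rw [Matrix.rank_transpose_mul_self, h]; omega
      have h2 := det_ne_zero_of_rank_eq h1
      intro hc
      obtain ⟨-, hb⟩ := (add_eq_zero_iff_of_nonneg (sq_nonneg _) (sq_nonneg _)).mp hc
      exact h2 (by simpa using pow_eq_zero_iff (n := 2) (by norm_num) |>.mp hb)


variable {ℓ n : ℕ}

lemma dp_self_nonneg {k : ℕ} (v : Fin k → ℝ) : 0 ≤ v ⬝ᵥ v :=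
  Finset.sum_nonneg fun i _ => mul_self_nonneg _

lemma gram_dot (M : Matrix (Fin ℓ) (Fin n) ℝ) (x : Fin ℓ → ℝ) :
    x ⬝ᵥ ((M * Mᵀ) *ᵥ x) = (Mᵀ *ᵥ x) ⬝ᵥ (Mᵀ *ᵥ x) := by
  rw [← mulVec_mulVec, dotProduct_mulVec, ← Matrix.mulVec_transpose]

lemma exists_E0 (ℓ n : ℕ) (Q : Matrix (Fin ℓ) (Fin n) ℝ) :
    ∃ E₀ : Matrix (Fin ℓ) (Fin n) ℝ, E₀.rank = min ℓ n ∧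
      E₀ᵀ * Q = Qᵀ * E₀ ∧ (E₀ᵀ * Q).PosSemidef := by
  classical
  set m := min ℓ n with hm
  set r := Q.rank with hr
  have hrℓ : r ≤ ℓ := by simpa using Q.rank_le_card_height
  have hrn : r ≤ n := by simpa using Q.rank_le_card_width
  have hrm : r ≤ m := le_min hrℓ hrn
  set d := m - r with hd
  have hdr : d + r = m := by omega
  -- kernels
  set S : Submodule ℝ (Fin ℓ → ℝ) := LinearMap.ker (Qᵀ).mulVecLin with hS
  set T : Submodule ℝ (Fin n → ℝ) := LinearMap.ker Q.mulVecLin with hT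
  have hSdim : finrank ℝ S + r = ℓ := by
    have h1 := LinearMap.finrank_range_add_finrank_ker (Qᵀ).mulVecLin
    have h2 : finrank ℝ (LinearMap.range (Qᵀ).mulVecLin) = r := by
      rw [show finrank ℝ (LinearMap.range (Qᵀ).mulVecLin) = Qᵀ.rank from rfl,
        Matrix.rank_transpose]
    rw [h2, Module.finrank_fintype_fun_eq_card, Fintype.card_fin, ← hS] at h1
    omega
  have hTdim : finrank ℝ T + r = n := by
    have h1 := LinearMap.finrank_range_add_finrank_ker Q.mulVecLin
    have h2 : finrank ℝ (LinearMap.range Q.mulVecLin) = r := rfl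
    rw [h2, Module.finrank_fintype_fun_eq_card, Fintype.card_fin, ← hT] at h1
    omega
  have hdS : d ≤ finrank ℝ S := by omega
  have hdT : d ≤ finrank ℝ T := by omega
  -- independent families in the kernels
  let bS := Module.finBasis ℝ S
  let bT := Module.finBasis ℝ T
  let u : Fin d → (Fin ℓ → ℝ) := fun a => (bS (Fin.castLE hdS a) : Fin ℓ → ℝ)
  let w : Fin d → (Fin n → ℝ) := fun a => (bT (Fin.castLE hdT a) : Fin n → ℝ)
  have hu_indep : LinearIndependent ℝ u := by
    have h1 : LinearIndependent ℝ (fun a : Fin d => bS (Fin.castLE hdS a)) :=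
      bS.linearIndependent.comp _ (Fin.castLE_injective hdS)
    exact h1.map' S.subtype (Submodule.ker_subtype S)
  have hw_indep : LinearIndependent ℝ w := by
    have h1 : LinearIndependent ℝ (fun a : Fin d => bT (Fin.castLE hdT a)) :=
      bT.linearIndependent.comp _ (Fin.castLE_injective hdT)
    exact h1.map' T.subtype (Submodule.ker_subtype T)
  have hu_mem : ∀ a, Qᵀ *ᵥ u a = 0 := fun a => (bS (Fin.castLE hdS a)).2
  have hw_mem : ∀ a, Q *ᵥ w a = 0 := fun a => (bT (Fin.castLE hdT a)).2
  -- matrices from the families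
  let U : Matrix (Fin d) (Fin ℓ) ℝ := Matrix.of u
  let W : Matrix (Fin d) (Fin n) ℝ := Matrix.of w
  have hUQ : U * Q = 0 := by
    ext a j
    have := congrFun (hu_mem a) j
    simp only [Matrix.mulVec, dotProduct, Matrix.transpose_apply, Pi.zero_apply] at this
    simp only [Matrix.mul_apply, Matrix.zero_apply, U, Matrix.of_apply]
    rw [← this]
    exact Finset.sum_congr rfl fun i _ => mul_comm _ _
  have hQW : Q * Wᵀ = 0 := by
    ext i a
    have := congrFun (hw_mem a) i
    simp only [Matrix.mulVec, dotProduct, Pi.zero_apply] at this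
    simpa [Matrix.mul_apply, W] using this
  -- injectivity of Wᵀ *ᵥ ·
  have hWt_inj : ∀ y : Fin d → ℝ, Wᵀ *ᵥ y = 0 → y = 0 := by
    intro y hy
    have h0 : ∑ a, y a • w a = 0 := by
      funext j
      have := congrFun hy j
      simpa [Matrix.mulVec, dotProduct, Matrix.transpose_apply, W,
        Finset.sum_apply, mul_comm] using this
    exact funext fun a => Fintype.linearIndependent_iff.mp hw_indep y h0 a
  -- the candidate
  set N : Matrix (Fin ℓ) (Fin n) ℝ := Uᵀ * W with hN
  set E₀ : Matrix (Fin ℓ) (Fin n) ℝ := Q + N with hE₀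
  have hQtUt : Qᵀ * Uᵀ = 0 := by
    rw [← Matrix.transpose_mul, hUQ, Matrix.transpose_zero]
  have hWQt : W * Qᵀ = 0 := by
    rw [← Matrix.transpose_transpose W, ← Matrix.transpose_mul, hQW, Matrix.transpose_zero]
  have hNtQ : Nᵀ * Q = 0 := by
    rw [hN, Matrix.transpose_mul, Matrix.transpose_transpose, Matrix.mul_assoc, hUQ, Matrix.mul_zero]
  have hQtN : Qᵀ * N = 0 := by
    rw [hN, ← Matrix.mul_assoc, hQtUt, Matrix.zero_mul]
  have hsym : E₀ᵀ * Q = Qᵀ * E₀ := by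
    rw [hE₀, Matrix.transpose_add, Matrix.add_mul, Matrix.mul_add, hNtQ, hQtN]
  have hpsd : (E₀ᵀ * Q).PosSemidef := by
    have : E₀ᵀ * Q = Qᴴ * Q := by
      rw [hE₀, Matrix.transpose_add, Matrix.add_mul, hNtQ, add_zero,
        Matrix.conjTranspose_eq_transpose_of_trivial]
    rw [this]
    exact Matrix.posSemidef_conjTranspose_mul_self Q
  -- Gram matrix decomposition
  have hgram : E₀ * E₀ᵀ = Q * Qᵀ + N * Nᵀ := by
    have h1 : Q * Nᵀ = 0 := by
      rw [hN, Matrix.transpose_mul, ← Matrix.mul_assoc, hQW, Matrix.zero_mul]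
    have h2 : N * Qᵀ = 0 := by
      rw [hN, Matrix.mul_assoc, hWQt, Matrix.mul_zero]
    rw [hE₀, Matrix.transpose_add, Matrix.add_mul, Matrix.mul_add, Matrix.mul_add,
      h1, h2, add_zero, zero_add]
  -- kernel identification
  have hker : LinearMap.ker (E₀ * E₀ᵀ).mulVecLin = S ⊓ LinearMap.ker U.mulVecLin := by
    ext x
    simp only [LinearMap.mem_ker, Matrix.mulVecLin_apply, Submodule.mem_inf, hS]
    constructor
    · intro hx
      have hdot : x ⬝ᵥ ((Q * Qᵀ) *ᵥ x) + x ⬝ᵥ ((N * Nᵀ) *ᵥ x) = 0 := by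
        rw [← dotProduct_add, ← Matrix.add_mulVec, ← hgram, hx, dotProduct_zero]
      rw [gram_dot, gram_dot] at hdot
      have h1 : Qᵀ *ᵥ x = 0 ∧ Nᵀ *ᵥ x = 0 := by
        constructor
        · refine dotProduct_self_eq_zero.mp ?_
          have := dp_self_nonneg (Nᵀ *ᵥ x)
          have := dp_self_nonneg (Qᵀ *ᵥ x)
          linarith
        · refine dotProduct_self_eq_zero.mp ?_
          have := dp_self_nonneg (Nᵀ *ᵥ x)
          have := dp_self_nonneg (Qᵀ *ᵥ x)
          linarith
      refine ⟨h1.1, ?_⟩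
      have h2 : Wᵀ *ᵥ (U *ᵥ x) = 0 := by
        have : Nᵀ *ᵥ x = Wᵀ *ᵥ (U *ᵥ x) := by
          rw [hN, Matrix.transpose_mul, Matrix.transpose_transpose, mulVec_mulVec]
        rw [← this]; exact h1.2
      exact hWt_inj _ h2
    · rintro ⟨hx1, hx2⟩
      rw [hgram, Matrix.add_mulVec]
      have h1 : (Q * Qᵀ) *ᵥ x = 0 := by
        rw [← mulVec_mulVec, hx1, Matrix.mulVec_zero]
      have h2 : (N * Nᵀ) *ᵥ x = 0 := by
        rw [hN, Matrix.transpose_mul, Matrix.transpose_transpose]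
        rw [show Uᵀ * W * (Wᵀ * U) = Uᵀ * W * Wᵀ * U by rw [Matrix.mul_assoc (Uᵀ * W)],
          ← mulVec_mulVec, hx2, Matrix.mulVec_zero]
      rw [h1, h2, add_zero]
  -- U has full row rank, hence U * Uᵀ is invertible
  have hU_rank : U.rank = d := by
    have := (show LinearIndependent ℝ (U : Fin d → Fin ℓ → ℝ) from hu_indep).rank_matrix
    simpa using this
  have hUUt_unit : IsUnit (U * Uᵀ).det := by
    have h1 : (U * Uᵀ).rank = d := by rw [Matrix.rank_self_mul_transpose, hU_rank]
    exact isUnit_iff_ne_zero.mpr (det_ne_zero_of_rank_eq h1)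
  -- surjectivity of the restriction map
  let f : S →ₗ[ℝ] (Fin d → ℝ) := U.mulVecLin.comp S.subtype
  have hf_surj : Function.Surjective f := by
    intro y
    set x : Fin ℓ → ℝ := Uᵀ *ᵥ ((U * Uᵀ)⁻¹ *ᵥ y) with hx
    have hxS : x ∈ S := by
      show Qᵀ *ᵥ x = 0
      rw [hx, mulVec_mulVec, hQtUt, Matrix.zero_mulVec]
    refine ⟨⟨x, hxS⟩, ?_⟩
    show U *ᵥ x = y
    rw [hx, mulVec_mulVec, mulVec_mulVec, Matrix.mul_nonsing_inv _ hUUt_unit,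
      Matrix.one_mulVec]
  -- dimension count
  have hfr : finrank ℝ (LinearMap.ker f) + d = finrank ℝ S := by
    have h1 := LinearMap.finrank_range_add_finrank_ker f
    have h2 : LinearMap.range f = ⊤ := LinearMap.range_eq_top.mpr hf_surj
    rw [h2, finrank_top, Module.finrank_fintype_fun_eq_card, Fintype.card_fin] at h1
    omega
  have hker_f : finrank ℝ (LinearMap.ker f) =
      finrank ℝ (S ⊓ LinearMap.ker U.mulVecLin : Submodule ℝ (Fin ℓ → ℝ)) := by
    have h1 : LinearMap.ker f = Submodule.comap S.subtype (LinearMap.ker U.mulVecLin) :=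
      LinearMap.ker_comp _ _
    rw [h1, ← Submodule.finrank_map_subtype_eq, Submodule.map_comap_subtype]
  -- conclude
  refine ⟨E₀, ?_, hsym, hpsd⟩
  have hrank_gram : (E₀ * E₀ᵀ).rank = m := by
    have h1 := LinearMap.finrank_range_add_finrank_ker (E₀ * E₀ᵀ).mulVecLin
    rw [Module.finrank_fintype_fun_eq_card, Fintype.card_fin] at h1
    have h2 : finrank ℝ (LinearMap.range (E₀ * E₀ᵀ).mulVecLin) = (E₀ * E₀ᵀ).rank := rfl
    rw [h2, hker] at h1
    omega
  rw [← Matrix.rank_self_mul_transpose, hrank_gram]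
/-- the detector polynomial -/
noncomputable def Ppoly (ℓ n : ℕ) : MvPolynomial (Fin ℓ × Fin n) ℝ :=
  letI Y : Matrix (Fin ℓ) (Fin n) (MvPolynomial (Fin ℓ × Fin n) ℝ) :=
    Matrix.of fun i j => MvPolynomial.X (i, j)
  (Y * Yᵀ).det ^ 2 + (Yᵀ * Y).det ^ 2

lemma eval_Ppoly (x : Fin ℓ × Fin n → ℝ) :
    MvPolynomial.eval x (Ppoly ℓ n) = phi (toMat x) := by
  set Y : Matrix (Fin ℓ) (Fin n) (MvPolynomial (Fin ℓ × Fin n) ℝ) :=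
    Matrix.of fun i j => MvPolynomial.X (i, j) with hY
  have hmap : Y.map (MvPolynomial.eval x) = toMat x := by
    ext i j
    simp [hY, toMat]
  have h1 : ∀ M : Matrix (Fin ℓ) (Fin n) (MvPolynomial (Fin ℓ × Fin n) ℝ),
      MvPolynomial.eval x (M * Mᵀ).det = ((M.map (MvPolynomial.eval x)) *
        (M.map (MvPolynomial.eval x))ᵀ).det := by
    intro M
    rw [RingHom.map_det, RingHom.mapMatrix_apply, Matrix.map_mul, Matrix.transpose_map]
  have h2 : ∀ M : Matrix (Fin ℓ) (Fin n) (MvPolynomial (Fin ℓ × Fin n) ℝ),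
      MvPolynomial.eval x (Mᵀ * M).det = ((M.map (MvPolynomial.eval x))ᵀ *
        (M.map (MvPolynomial.eval x))).det := by
    intro M
    rw [RingHom.map_det, RingHom.mapMatrix_apply, Matrix.map_mul, Matrix.transpose_map]
  show MvPolynomial.eval x ((Y * Yᵀ).det ^ 2 + (Yᵀ * Y).det ^ 2) = _
  rw [map_add, map_pow, map_pow, h1, h2, hmap]
  rfl

/-- the segment polynomial -/
noncomputable def qpoly (E F : Matrix (Fin ℓ) (Fin n) ℝ) : Polynomial ℝ :=
  letI Z : Matrix (Fin ℓ) (Fin n) (Polynomial ℝ) :=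
    Matrix.of fun i j => Polynomial.C (E i j) + Polynomial.X * Polynomial.C (F i j - E i j)
  (Z * Zᵀ).det ^ 2 + (Zᵀ * Z).det ^ 2

lemma eval_qpoly (E F : Matrix (Fin ℓ) (Fin n) ℝ) (t : ℝ) :
    (qpoly E F).eval t = phi (E + t • (F - E)) := by
  set Z : Matrix (Fin ℓ) (Fin n) (Polynomial ℝ) :=
    Matrix.of fun i j => Polynomial.C (E i j) + Polynomial.X * Polynomial.C (F i j - E i j)
    with hZ
  have hmap : Z.map (Polynomial.evalRingHom t) = E + t • (F - E) := by
    ext i j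
    simp [hZ, Matrix.add_apply, Matrix.smul_apply, Matrix.sub_apply, smul_eq_mul]
  have h1 : ∀ M : Matrix (Fin ℓ) (Fin n) (Polynomial ℝ),
      Polynomial.evalRingHom t (M * Mᵀ).det = ((M.map (Polynomial.evalRingHom t)) *
        (M.map (Polynomial.evalRingHom t))ᵀ).det := by
    intro M
    rw [RingHom.map_det, RingHom.mapMatrix_apply, Matrix.map_mul, Matrix.transpose_map]
  have h2 : ∀ M : Matrix (Fin ℓ) (Fin n) (Polynomial ℝ),
      Polynomial.evalRingHom t (Mᵀ * M).det = ((M.map (Polynomial.evalRingHom t))ᵀ *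
        (M.map (Polynomial.evalRingHom t))).det := by
    intro M
    rw [RingHom.map_det, RingHom.mapMatrix_apply, Matrix.map_mul, Matrix.transpose_map]
  show Polynomial.evalRingHom t ((Z * Zᵀ).det ^ 2 + (Zᵀ * Z).det ^ 2) = _
  rw [map_add, map_pow, map_pow, h1, h2, hmap]
  rfl

lemma psd_smul {k : ℕ} {A : Matrix (Fin k) (Fin k) ℝ} (hA : A.PosSemidef) {c : ℝ}
    (hc : 0 ≤ c) : (c • A).PosSemidef := by
  refine ⟨?_, fun x => ?_⟩
  · show (c • A)ᴴ = c • A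
    rw [Matrix.conjTranspose_smul, hA.1]
    congr 1
  · simpa [Finsupp.mul_sum, mul_left_comm, mul_assoc] using mul_nonneg hc (hA.2 x)

lemma seg_mem (Q E F : Matrix (Fin ℓ) (Fin n) ℝ)
    (hE : Eᵀ * Q = Qᵀ * E) (hF : Fᵀ * Q = Qᵀ * F)
    (hE2 : (Eᵀ * Q).PosSemidef) (hF2 : (Fᵀ * Q).PosSemidef)
    {t : ℝ} (h0 : 0 ≤ t) (h1 : t ≤ 1) :
    ((E + t • (F - E))ᵀ * Q = Qᵀ * (E + t • (F - E))) ∧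
      ((E + t • (F - E))ᵀ * Q).PosSemidef := by
  have key : (E + t • (F - E))ᵀ * Q = (1 - t) • (Eᵀ * Q) + t • (Fᵀ * Q) := by
    rw [Matrix.transpose_add, Matrix.transpose_smul, Matrix.transpose_sub,
      Matrix.add_mul, Matrix.smul_mul, Matrix.sub_mul]
    module
  constructor
  · have key2 : Qᵀ * (E + t • (F - E)) = (1 - t) • (Qᵀ * E) + t • (Qᵀ * F) := by
      rw [Matrix.mul_add, Matrix.mul_smul, Matrix.mul_sub]
      module
    rw [key, key2, hE, hF]
  · rw [key]
    exact (psd_smul hE2 (by linarith)).add (psd_smul hF2 h0)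

end FRRGaux

open FRRGaux Filter Set Module in
/-- for fixed `Q`, the set `{E : rank E = min ℓ n}` is relative
generic in `{E : EᵀQ = QᵀE and EᵀQ positive semidefinite}`. -/
theorem full_rank_relGeneric_in_VQ (ℓ n : ℕ) (hℓ : 1 ≤ ℓ) (hn : 1 ≤ n)
    (Q : Matrix (Fin ℓ) (Fin n) ℝ) :
    RelGeneric {x : Fin ℓ × Fin n → ℝ | (toMat x).rank = min ℓ n}
      {x : Fin ℓ × Fin n → ℝ |
        (toMat x)ᵀ * Q = Qᵀ * toMat x ∧ ((toMat x)ᵀ * Q).PosSemidef} := by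
  obtain ⟨E₀, hrank, hsym, hpsd⟩ := exists_E0 ℓ n Q
  refine ⟨{x | MvPolynomial.eval x (Ppoly ℓ n) = 0}, ⟨1, fun _ => Ppoly ℓ n, ?_⟩, ?_, ?_⟩
  · ext x
    exact ⟨fun h i => h, fun h => h 0⟩
  · rintro x ⟨hxS, hxV⟩
    refine ⟨?_, hxV⟩
    show MvPolynomial.eval x (Ppoly ℓ n) = 0
    rw [eval_Ppoly]
    by_contra h
    exact hxS ((phi_ne_zero_iff _).mp h)
  · rintro x ⟨hx1, hx2⟩
    set E : Matrix (Fin ℓ) (Fin n) ℝ := toMat x with hE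
    set x₀ : Fin ℓ × Fin n → ℝ := fun p => E₀ p.1 p.2 with hx₀def
    have hq1 : (qpoly E E₀).eval 1 = phi E₀ := by
      rw [eval_qpoly]
      congr 1
      rw [one_smul, add_sub_cancel]
    have hphiE₀ : phi E₀ ≠ 0 := (phi_ne_zero_iff E₀).mpr hrank
    have hqne : qpoly E E₀ ≠ 0 := by
      intro h
      rw [h, Polynomial.eval_zero] at hq1
      exact hphiE₀ hq1.symm
    have hFfin : {t : ℝ | (qpoly E E₀).IsRoot t}.Finite :=
      Polynomial.finite_setOf_isRoot hqne
    -- the path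
    set γ : ℝ → (Fin ℓ × Fin n → ℝ) := fun t => x + t • (x₀ - x) with hγ
    have hγ_mat : ∀ t, toMat (γ t) = E + t • (E₀ - E) := by
      intro t
      ext i j
      simp [toMat, hγ, hx₀def, hE, Matrix.add_apply, Matrix.smul_apply, Matrix.sub_apply,
        Pi.add_apply, Pi.smul_apply, Pi.sub_apply, smul_eq_mul]
    have htend : Tendsto γ (nhdsWithin 0 (Set.Ioi 0)) (nhds x) := by
      have hc : Continuous γ := by
        apply continuous_const.add
        exact continuous_id.smul continuous_const
      have h0 : γ 0 = x := by
        rw [hγ]; simp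
      have := hc.tendsto 0
      rw [h0] at this
      exact this.mono_left nhdsWithin_le_nhds
    apply mem_closure_of_tendsto htend
    -- eventually in W^c ∩ V
    have ev1 : ∀ᶠ t in nhdsWithin 0 (Set.Ioi 0), t ∈ Set.Ioo (0:ℝ) 1 := by
      filter_upwards [Ioo_mem_nhdsGT zero_lt_one] with t ht
        using ht
    have hclosed : IsClosed ({t : ℝ | (qpoly E E₀).IsRoot t} \ {0}) :=
      (hFfin.subset Set.diff_subset).isClosed
    have h0notin : (0:ℝ) ∉ {t : ℝ | (qpoly E E₀).IsRoot t} \ {0} := fun h => h.2 rfl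
    have hcompl_nhds : ({t : ℝ | (qpoly E E₀).IsRoot t} \ {0})ᶜ ∈ nhds (0:ℝ) :=
      hclosed.isOpen_compl.mem_nhds h0notin
    have ev2 : ∀ᶠ t in nhdsWithin 0 (Set.Ioi 0), ¬ (qpoly E E₀).IsRoot t := by
      filter_upwards [mem_nhdsWithin_of_mem_nhds hcompl_nhds, self_mem_nhdsWithin]
        with t h1 h2 hF
      exact h1 ⟨hF, fun hs => (Set.mem_Ioi.mp h2).ne' (by simpa using hs)⟩
    filter_upwards [ev1, ev2] with t ht hroot
    refine ⟨?_, ?_⟩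
    · intro hmem
      apply hroot
      show Polynomial.eval t (qpoly E E₀) = 0
      rw [eval_qpoly, ← hγ_mat t, ← eval_Ppoly]
      exact hmem
    · show (toMat (γ t))ᵀ * Q = Qᵀ * toMat (γ t) ∧ ((toMat (γ t))ᵀ * Q).PosSemidef
      rw [hγ_mat t]
      exact seg_mem Q E E₀ hx1 hsym hx2 hpsd (le_of_lt ht.1) (le_of_lt ht.2)
end

section
/- Let ℓ, n ∈ ℕ with ℓ ≥ n ≥ 1. The set S = {(E,Q) ∈ ℝ^{ℓ×n} × ℝ^{ℓ×n} : EᵀQ = QᵀE and EᵀQ is positive definite} is relative generic in V = {(E,Q) ∈ ℝ^{ℓ×n} × ℝ^{ℓ×n} : EᵀQ = QᵀE and EᵀQ is positive semidefinite}. -/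
open Matrix

open Module Polynomial



lemma exists_good_Z {ℓ n : ℕ} (hℓn : n ≤ ℓ) (Q : Matrix (Fin ℓ) (Fin n) ℝ) :
    ∃ Z : Matrix (Fin ℓ) (Fin n) ℝ, Function.Injective Z.mulVec ∧ Zᵀ * Q = Qᵀ * Q := by
  classical
  set f : EuclideanSpace ℝ (Fin n) →ₗ[ℝ] EuclideanSpace ℝ (Fin ℓ) := Matrix.toEuclideanLin Q
    with hfdef
  set K := LinearMap.ker f with hK
  set C := LinearMap.range f with hC
  have hdim : finrank ℝ K ≤ finrank ℝ Cᗮ := by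
    have h1 : finrank ℝ C + finrank ℝ K = n := by
      simpa [finrank_euclideanSpace] using LinearMap.finrank_range_add_finrank_ker f
    have h2 : finrank ℝ C + finrank ℝ Cᗮ = ℓ := by
      simpa [finrank_euclideanSpace] using Submodule.finrank_add_finrank_orthogonal (K := C)
    omega
  let bK := Module.finBasis ℝ K
  let bC := Module.finBasis ℝ Cᗮ
  let j : K →ₗ[ℝ] Cᗮ := bK.constr ℝ fun i => bC (Fin.castLE hdim i)
  have hj : Function.Injective j := by
    let g : Cᗮ →ₗ[ℝ] K := bC.constr ℝ fun i =>
      if h : (i : ℕ) < finrank ℝ K then bK ⟨i, h⟩ else 0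
    have hgj : g.comp j = LinearMap.id := by
      apply bK.ext; intro i
      simp only [LinearMap.comp_apply, LinearMap.id_apply, j, Basis.constr_basis, g]
      rw [Fin.coe_castLE, dif_pos i.isLt]
    intro a b hab
    have := congrArg g hab
    simpa [← LinearMap.comp_apply, hgj] using this
  let w : EuclideanSpace ℝ (Fin n) →ₗ[ℝ] EuclideanSpace ℝ (Fin ℓ) :=
    Cᗮ.subtype ∘ₗ (j ∘ₗ (K.orthogonalProjectionOnto).toLinearMap)
  set g' : EuclideanSpace ℝ (Fin n) →ₗ[ℝ] EuclideanSpace ℝ (Fin ℓ) := f + w with hg'def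
  have hwmem : ∀ v, w v ∈ Cᗮ := fun v => Submodule.coe_mem _
  have hg' : Function.Injective g' := by
    rw [← LinearMap.ker_eq_bot]
    rw [LinearMap.ker_eq_bot']
    intro v hv
    have hv' : f v + w v = 0 := hv
    have hfv : f v ∈ C := LinearMap.mem_range_self f v
    have hveq : f v = -w v := eq_neg_of_add_eq_zero_left hv'
    have hfv0 : f v = 0 := by
      have hmem : f v ∈ C ⊓ Cᗮ := ⟨hfv, by rw [hveq]; exact Cᗮ.neg_mem (hwmem v)⟩
      have := (Submodule.orthogonal_disjoint C).le_bot hmem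
      simpa using this
    have hwv0 : w v = 0 := by rw [hveq] at hfv0; simpa using hfv0
    have hvK : v ∈ K := LinearMap.mem_ker.mpr hfv0
    have hproj : ((K.orthogonalProjectionOnto v : K) : EuclideanSpace ℝ (Fin n)) = v :=
      K.starProjection_eq_self_iff.mpr hvK
    have hjz : j (K.orthogonalProjectionOnto v) = 0 := by
      have : ((j (K.orthogonalProjectionOnto v) : Cᗮ) : EuclideanSpace ℝ (Fin ℓ)) = 0 := hwv0
      exact Subtype.ext this
    have : (K.orthogonalProjectionOnto v : K) = 0 := hj (by rw [hjz, map_zero])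
    rw [← hproj, this]
    rfl
  refine ⟨Matrix.toEuclideanLin.symm g', ?_, ?_⟩
  · intro a b hab
    have h1 : ∀ x : Fin n → ℝ,
        Matrix.toEuclideanLin (Matrix.toEuclideanLin.symm g') ((WithLp.equiv 2 _).symm x)
          = (WithLp.equiv 2 (Fin ℓ → ℝ)).symm ((Matrix.toEuclideanLin.symm g' : Matrix (Fin ℓ) (Fin n) ℝ) *ᵥ x) :=
      fun x => rfl
    have h2 : g' ((WithLp.equiv 2 _).symm a) = g' ((WithLp.equiv 2 _).symm b) := by
      have := congrArg (WithLp.equiv 2 (Fin ℓ → ℝ)).symm hab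
      rw [← h1 a, ← h1 b] at this
      simpa [LinearEquiv.apply_symm_apply] using this
    have := hg' h2
    exact (WithLp.equiv 2 (Fin n → ℝ)).symm.injective this
  · apply Matrix.toEuclideanLin.injective
    have hmul : ∀ (A : Matrix (Fin n) (Fin ℓ) ℝ) (B : Matrix (Fin ℓ) (Fin n) ℝ),
        Matrix.toEuclideanLin (A * B)
          = (Matrix.toEuclideanLin A).comp (Matrix.toEuclideanLin B) := by
      intro A B
      apply LinearMap.ext; intro v
      simp only [Matrix.toEuclideanLin_apply, LinearMap.comp_apply, Equiv.apply_symm_apply,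
        Matrix.mulVec_mulVec]
    have hZct : (Matrix.toEuclideanLin.symm g' : Matrix (Fin ℓ) (Fin n) ℝ)ᵀ
        = (Matrix.toEuclideanLin.symm g' : Matrix (Fin ℓ) (Fin n) ℝ)ᴴ :=
      (Matrix.conjTranspose_eq_transpose_of_trivial _).symm
    have hQct : Qᵀ = Qᴴ := (Matrix.conjTranspose_eq_transpose_of_trivial _).symm
    rw [hmul, hmul, hZct, hQct, Matrix.toEuclideanLin_conjTranspose_eq_adjoint,
      Matrix.toEuclideanLin_conjTranspose_eq_adjoint, LinearEquiv.apply_symm_apply]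
    apply LinearMap.ext; intro v
    apply ext_inner_right ℝ
    intro u
    simp only [LinearMap.comp_apply, LinearMap.adjoint_inner_left]
    have hgu : g' u = f u + w u := rfl
    have horth : (inner ℝ (f v) (w u) : ℝ) = 0 :=
      (Submodule.mem_orthogonal C (w u)).mp (hwmem u) (f v) (LinearMap.mem_range_self f v)
    rw [hgu, inner_add_right, horth, add_zero]



lemma smul_posSemidef {k : ℕ} {M : Matrix (Fin k) (Fin k) ℝ} (hM : M.PosSemidef)
    {t : ℝ} (ht : 0 ≤ t) : (t • M).PosSemidef := by
  refine Matrix.PosSemidef.of_dotProduct_mulVec_nonneg ?_ fun x => ?_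
  · have := hM.1
    unfold Matrix.IsHermitian at *
    rw [Matrix.conjTranspose_smul, this]
    simp
  · rw [Matrix.smul_mulVec, dotProduct_smul]
    exact mul_nonneg ht (hM.dotProduct_mulVec_nonneg x)

lemma posDef_transpose_mul_self {m k : ℕ} {B : Matrix (Fin m) (Fin k) ℝ}
    (hB : Function.Injective B.mulVec) : (Bᵀ * B).PosDef := by
  rw [← Matrix.conjTranspose_eq_transpose_of_trivial]
  have hpsd := Matrix.posSemidef_conjTranspose_mul_self B
  refine Matrix.PosDef.of_dotProduct_mulVec_pos hpsd.1 fun x hx => ?_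
  rcases (hpsd.dotProduct_mulVec_nonneg x).lt_or_eq with h | h
  · exact h
  · exfalso
    have h0 := (hpsd.dotProduct_mulVec_zero_iff x).mp h.symm
    rw [Matrix.conjTranspose_mul_self_mulVec_eq_zero] at h0
    exact hx (hB (h0.trans (B.mulVec_zero).symm))

lemma posDef_of_posSemidef_det_ne_zero {k : ℕ} {M : Matrix (Fin k) (Fin k) ℝ}
    (hM : M.PosSemidef) (hdet : M.det ≠ 0) : M.PosDef := by
  refine Matrix.PosDef.of_dotProduct_mulVec_pos hM.1 fun x hx => ?_
  rcases (hM.dotProduct_mulVec_nonneg x).lt_or_eq with h | h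
  · exact h
  · exfalso
    have h0 : M *ᵥ x = 0 := (hM.dotProduct_mulVec_zero_iff x).mp h.symm
    have hinj : Function.Injective M.mulVec :=
      Matrix.mulVec_injective_iff_isUnit.mpr
        ((Matrix.isUnit_iff_isUnit_det M).mpr (isUnit_iff_ne_zero.mpr hdet))
    exact hx (hinj (h0.trans (M.mulVec_zero).symm))

lemma inj_of_det_transpose_mul_self_ne_zero {m k : ℕ} {B : Matrix (Fin m) (Fin k) ℝ}
    (h : (Bᵀ * B).det ≠ 0) : Function.Injective B.mulVec := by
  have hinj : Function.Injective (Bᵀ * B).mulVec :=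
    Matrix.mulVec_injective_iff_isUnit.mpr
      ((Matrix.isUnit_iff_isUnit_det _).mpr (isUnit_iff_ne_zero.mpr h))
  intro a b hab
  apply hinj
  rw [← Matrix.mulVec_mulVec, ← Matrix.mulVec_mulVec, hab]

lemma exists_small_t {m k : ℕ} (E Z : Matrix (Fin m) (Fin k) ℝ)
    (hZ : Function.Injective Z.mulVec) {δ : ℝ} (hδ : 0 < δ) :
    ∃ t : ℝ, 0 < t ∧ t < δ ∧ Function.Injective (E + t • Z).mulVec := by
  classical
  set N : Matrix (Fin m) (Fin k) (Polynomial ℝ) :=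
    Matrix.of fun i j => Polynomial.C (E i j) + Polynomial.X * Polynomial.C (Z i j) with hN
  set P : Polynomial ℝ := (Nᵀ * N).det with hP
  have heval : ∀ t : ℝ, P.eval t = ((E + t • Z)ᵀ * (E + t • Z)).det := by
    intro t
    have h1 : N.map (Polynomial.evalRingHom t) = E + t • Z := by
      ext i j
      simp only [hN, Matrix.map_apply, Matrix.of_apply, Polynomial.eval_add, Polynomial.eval_mul,
        Polynomial.coe_evalRingHom, Polynomial.eval_C, Polynomial.eval_X,
        Matrix.add_apply, Matrix.smul_apply, smul_eq_mul]
    have h2 : P.eval t = ((Nᵀ * N).map (Polynomial.evalRingHom t)).det :=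
      RingHom.map_det (Polynomial.evalRingHom t) (Nᵀ * N)
    rw [h2, Matrix.map_mul, Matrix.transpose_map, h1]
  have hPne : P ≠ 0 := by
    have hcont : Continuous fun s : ℝ => ((s • E + Z)ᵀ * (s • E + Z)).det := by
      apply Continuous.matrix_det
      apply Continuous.matrix_mul
      · exact Continuous.matrix_transpose (by continuity)
      · continuity
    have hz : ((0 : ℝ) • E + Z)ᵀ * ((0 : ℝ) • E + Z) = Zᵀ * Z := by simp
    have hzne : (((0:ℝ) • E + Z)ᵀ * ((0:ℝ) • E + Z)).det ≠ 0 := by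
      rw [hz]; exact (posDef_transpose_mul_self hZ).det_pos.ne'
    have hopen : IsOpen {s : ℝ | ((s • E + Z)ᵀ * (s • E + Z)).det ≠ 0} :=
      isOpen_compl_singleton.preimage hcont
    obtain ⟨r, hr, hball⟩ := Metric.isOpen_iff.mp hopen 0 hzne
    set s : ℝ := r / 2 with hs
    have hsne : s ≠ 0 := by positivity
    have hsmem : ((s • E + Z)ᵀ * (s • E + Z)).det ≠ 0 := by
      apply hball
      simp only [Metric.mem_ball, Real.dist_eq, sub_zero, hs]
      rw [abs_of_pos (by positivity)]
      linarith
    intro h0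
    have := heval (1 / s)
    rw [h0, Polynomial.eval_zero] at this
    have hE : E + (1 / s) • Z = (1 / s) • (s • E + Z) := by
      rw [smul_add, smul_smul]
      field_simp
      simp
    have hsm : ((1/s) • (s • E + Z))ᵀ * ((1/s) • (s • E + Z))
        = ((1/s) * (1/s)) • ((s • E + Z)ᵀ * (s • E + Z)) := by
      rw [Matrix.transpose_smul, Matrix.smul_mul, Matrix.mul_smul, smul_smul]
    rw [hE, hsm, Matrix.det_smul] at this
    have hcne : ((1:ℝ)/s) * (1/s) ≠ 0 := by positivity
    rcases mul_eq_zero.mp this.symm with h | h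
    · exact pow_ne_zero _ hcne h
    · exact hsmem h
  have hfin := Polynomial.finite_setOf_isRoot hPne
  have hinf : (Set.Ioo (0:ℝ) δ).Infinite := Set.infinite_coe_iff.mp (Set.Ioo.infinite hδ)
  obtain ⟨t, ⟨ht0, htδ⟩, htr⟩ := (hinf.diff hfin).nonempty
  refine ⟨t, ht0, htδ, inj_of_det_transpose_mul_self_ne_zero ?_⟩
  rw [← heval]
  exact fun hc => htr hc

lemma detW_isAlgebraicSet (ℓ n : ℕ) :
    IsAlgebraicSet {x : PairIdx ℓ n → ℝ | ((pE x)ᵀ * pQ x).det = 0} := by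
  classical
  set ME : Matrix (Fin ℓ) (Fin n) (MvPolynomial (PairIdx ℓ n) ℝ) :=
    Matrix.of fun i j => MvPolynomial.X (Sum.inl (i, j)) with hME
  set MQ : Matrix (Fin ℓ) (Fin n) (MvPolynomial (PairIdx ℓ n) ℝ) :=
    Matrix.of fun i j => MvPolynomial.X (Sum.inr (i, j)) with hMQ
  refine ⟨1, fun _ => (MEᵀ * MQ).det, ?_⟩
  ext x
  have hkey : MvPolynomial.eval x (MEᵀ * MQ).det = ((pE x)ᵀ * pQ x).det := by
    have h2 : (MEᵀ * MQ).map (MvPolynomial.eval x) = (pE x)ᵀ * pQ x := by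
      rw [Matrix.map_mul, Matrix.transpose_map]
      congr 1
      · congr 1
        ext i j
        simp [hME, pE]
      · ext i j
        simp [hMQ, pQ]
    rw [RingHom.map_det, RingHom.mapMatrix_apply, h2]
  simp only [Set.mem_setOf_eq, hkey]
  constructor
  · intro h _; exact h
  · intro h; exact h 0

lemma closure_step (hn : 1 ≤ n) (hℓn : n ≤ ℓ) (x : PairIdx ℓ n → ℝ)
    (hsym : (pE x)ᵀ * pQ x = (pQ x)ᵀ * pE x) (hpsd : ((pE x)ᵀ * pQ x).PosSemidef) :
    x ∈ closure ({y : PairIdx ℓ n → ℝ | ¬ ((pE y)ᵀ * pQ y).det = 0} ∩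
      {y : PairIdx ℓ n → ℝ |
        (pE y)ᵀ * pQ y = (pQ y)ᵀ * pE y ∧ ((pE y)ᵀ * pQ y).PosSemidef}) := by
  classical
  set E := pE x with hE
  set Q := pQ x with hQ
  obtain ⟨Z, hZinj, hZQ⟩ := exists_good_Z hℓn Q
  have hQZ : Qᵀ * Z = Qᵀ * Q := by
    have h1 := congrArg Matrix.transpose hZQ
    rwa [Matrix.transpose_mul, Matrix.transpose_mul, Matrix.transpose_transpose,
      Matrix.transpose_transpose] at h1
  rw [Metric.mem_closure_iff]
  intro ε hε
  set F : ℝ → (PairIdx ℓ n → ℝ) := fun t => Sum.elim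
    (fun p => E p.1 p.2 + t * Z p.1 p.2)
    (fun p => Q p.1 p.2 + t ^ 2 * (E p.1 p.2 + t * Z p.1 p.2)) with hF
  have hFc : Continuous F := by
    apply continuous_pi
    rintro (⟨i, j⟩ | ⟨i, j⟩) <;> simp only [hF, Sum.elim_inl, Sum.elim_inr] <;> fun_prop
  have hF0 : F 0 = x := by
    funext idx
    rcases idx with ⟨i, j⟩ | ⟨i, j⟩ <;> simp [hF, hE, hQ, pE, pQ]
  obtain ⟨δ, hδ0, hδ⟩ := Metric.continuousAt_iff.mp hFc.continuousAt ε hε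
  obtain ⟨t, ht0, htδ, htinj⟩ := exists_small_t E Z hZinj hδ0
  have hpEF : pE (F t) = E + t • Z := by
    ext i j
    simp [pE, hF, Matrix.add_apply, Matrix.smul_apply, smul_eq_mul]
  have hpQF : pQ (F t) = Q + t ^ 2 • (E + t • Z) := by
    ext i j
    simp [pQ, hF, Matrix.add_apply, Matrix.smul_apply, smul_eq_mul]
    ring
  set Et : Matrix (Fin ℓ) (Fin n) ℝ := E + t • Z with hEt
  set Qt : Matrix (Fin ℓ) (Fin n) ℝ := Q + t ^ 2 • Et with hQt
  have hmain : Etᵀ * Qt = (Eᵀ * Q + t • (Qᵀ * Q)) + (t • Et)ᵀ * (t • Et) := by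
    calc Etᵀ * Qt = Etᵀ * Q + t ^ 2 • (Etᵀ * Et) := by
          rw [hQt, Matrix.mul_add, Matrix.mul_smul]
      _ = (Eᵀ * Q + t • (Qᵀ * Q)) + t ^ 2 • (Etᵀ * Et) := by
          rw [hEt, Matrix.transpose_add, Matrix.add_mul, Matrix.transpose_smul,
            Matrix.smul_mul, hZQ]
      _ = (Eᵀ * Q + t • (Qᵀ * Q)) + (t • Et)ᵀ * (t • Et) := by
          rw [Matrix.transpose_smul, Matrix.smul_mul, Matrix.mul_smul, smul_smul, ← pow_two]
  have hsym2 : Qtᵀ * Et = Etᵀ * Qt := by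
    rw [hmain, hQt, Matrix.transpose_add, Matrix.add_mul, Matrix.transpose_smul,
      Matrix.smul_mul]
    rw [show Qᵀ * Et = Eᵀ * Q + t • (Qᵀ * Q) by
      rw [hEt, Matrix.mul_add, Matrix.mul_smul, hQZ, ← hsym]]
    rw [Matrix.transpose_smul, Matrix.smul_mul, Matrix.mul_smul, smul_smul, ← pow_two]
  have hpsdQQ : (Qᵀ * Q).PosSemidef := by
    rw [← Matrix.conjTranspose_eq_transpose_of_trivial]
    exact Matrix.posSemidef_conjTranspose_mul_self Q
  have htEtinj : Function.Injective (t • Et).mulVec := by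
    intro a b hab
    apply htinj
    rw [Matrix.smul_mulVec, Matrix.smul_mulVec] at hab
    exact smul_right_injective _ (ne_of_gt ht0) hab
  have hpd : (Etᵀ * Qt).PosDef := by
    rw [hmain]
    exact Matrix.PosDef.posSemidef_add (hpsd.add (smul_posSemidef hpsdQQ ht0.le))
      (posDef_transpose_mul_self htEtinj)
  refine ⟨F t, ⟨?_, ?_, ?_⟩, ?_⟩
  · show ¬ ((pE (F t))ᵀ * pQ (F t)).det = 0
    rw [hpEF, hpQF]
    exact hpd.det_pos.ne'
  · rw [hpEF, hpQF]
    exact hsym2.symm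
  · rw [hpEF, hpQF]
    exact hpd.posSemidef
  · have hd : dist (F t) (F 0) < ε := hδ (by
      rw [Real.dist_eq, sub_zero, abs_of_pos ht0]; exact htδ)
    rw [hF0] at hd
    rw [dist_comm]
    exact hd


/-- for `ℓ ≥ n ≥ 1`, the set `{(E,Q) : EᵀQ = QᵀE > 0}` is
relative generic in `{(E,Q) : EᵀQ = QᵀE ≥ 0}`. -/
theorem posDef_relGeneric_in_posSemidef_pairs (ℓ n : ℕ) (hn : 1 ≤ n) (hℓn : n ≤ ℓ) :
    RelGeneric
      {x : PairIdx ℓ n → ℝ |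
        (pE x)ᵀ * pQ x = (pQ x)ᵀ * pE x ∧ ((pE x)ᵀ * pQ x).PosDef}
      {x : PairIdx ℓ n → ℝ |
        (pE x)ᵀ * pQ x = (pQ x)ᵀ * pE x ∧ ((pE x)ᵀ * pQ x).PosSemidef} := by
  refine ⟨{x | ((pE x)ᵀ * pQ x).det = 0}, detW_isAlgebraicSet ℓ n, ?_, ?_⟩
  · rintro x ⟨hxS, hsym, hpsd⟩
    refine ⟨?_, hsym, hpsd⟩
    by_contra hdet
    exact hxS ⟨hsym, posDef_of_posSemidef_det_ne_zero hpsd hdet⟩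
  · intro x hx
    have h := closure_step hn hℓn x hx.1 hx.2
    simpa [Set.compl_setOf] using h
end

section
/- Let ℓ, n, m ∈ ℕ, all ≥ 1. The set S = {(E,J,Q,B) ∈ Σ^H_{ℓ,n,m} : rank[E, B] = min{ℓ, n+m}} is relative generic in Σ^H_{ℓ,n,m}, where [E, B] ∈ ℝ^{ℓ×(n+m)} is the block matrix with blocks E and B. -/
open Matrix

/-- Coordinates of the product `ℝ^{ℓ×n} × ℝ^{ℓ×ℓ} × ℝ^{ℓ×n} × ℝ^{ℓ×m}`
of matrix spaces, hosting the tuples `(E, J, Q, B)`. -/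
abbrev IdxH (ℓ n m : ℕ) :=
  (Fin ℓ × Fin n) ⊕ (Fin ℓ × Fin ℓ) ⊕ (Fin ℓ × Fin n) ⊕ (Fin ℓ × Fin m)

/-- The matrix `E` of a tuple `(E, J, Q, B)`. -/
def mE {ℓ n m : ℕ} (x : IdxH ℓ n m → ℝ) : Matrix (Fin ℓ) (Fin n) ℝ :=
  Matrix.of fun i j => x (Sum.inl (i, j))

/-- The matrix `J` of a tuple `(E, J, Q, B)`. -/
def mJ {ℓ n m : ℕ} (x : IdxH ℓ n m → ℝ) : Matrix (Fin ℓ) (Fin ℓ) ℝ :=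
  Matrix.of fun i j => x (Sum.inr (Sum.inl (i, j)))

/-- The matrix `Q` of a tuple `(E, J, Q, B)`. -/
def mQ {ℓ n m : ℕ} (x : IdxH ℓ n m → ℝ) : Matrix (Fin ℓ) (Fin n) ℝ :=
  Matrix.of fun i j => x (Sum.inr (Sum.inr (Sum.inl (i, j))))

/-- The matrix `B` of a tuple `(E, J, Q, B)`. -/
def mB {ℓ n m : ℕ} (x : IdxH ℓ n m → ℝ) : Matrix (Fin ℓ) (Fin m) ℝ :=
  Matrix.of fun i j => x (Sum.inr (Sum.inr (Sum.inr (i, j))))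

/-- The set `Σ^H_{ℓ,n,m}` of (conservative) port-Hamiltonian tuples
`(E, J, Q, B)` with `Jᵀ = -J` and `EᵀQ = QᵀE ≥ 0`. -/
def SigmaH (ℓ n m : ℕ) : Set (IdxH ℓ n m → ℝ) :=
  {x | (mJ x)ᵀ = -(mJ x) ∧ (mE x)ᵀ * mQ x = (mQ x)ᵀ * mE x ∧
       ((mE x)ᵀ * mQ x).PosSemidef}


namespace RelGenericAux
open Matrix Module Submodule Set




section AuxMinor

variable {ι κ : Type} [Fintype ι] [Fintype κ] [DecidableEq ι] [DecidableEq κ]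

lemma aux_submatrix_eq (A : Matrix ι κ ℝ) {k : ℕ} (ρ : Fin k → ι) (γ : Fin k → κ) :
    A.submatrix ρ γ =
      (Matrix.of fun (i : Fin k) (a : ι) => if a = ρ i then (1:ℝ) else 0) * A *
      (Matrix.of fun (b : κ) (j : Fin k) => if b = γ j then (1:ℝ) else 0) := by
  ext i j
  simp [Matrix.mul_apply, ite_mul, mul_ite]

lemma rank_ge_of_minor (A : Matrix ι κ ℝ) {k : ℕ} (ρ : Fin k → ι) (γ : Fin k → κ)
    (h : (A.submatrix ρ γ).det ≠ 0) : k ≤ A.rank := by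
  have hu : IsUnit (A.submatrix ρ γ) :=
    (Matrix.isUnit_iff_isUnit_det _).2 (isUnit_iff_ne_zero.2 h)
  have h1 : (A.submatrix ρ γ).rank = k := by
    simpa using Matrix.rank_of_isUnit _ hu
  calc k = (A.submatrix ρ γ).rank := h1.symm
    _ ≤ A.rank := by
        rw [aux_submatrix_eq A ρ γ]
        exact le_trans (Matrix.rank_mul_le_left _ _) (Matrix.rank_mul_le_right _ _)

end AuxMinor




variable {ι κ : Type} [Fintype ι] [Fintype κ] [DecidableEq ι] [DecidableEq κ]

lemma exists_cols (A : Matrix ι κ ℝ) {k : ℕ} (hk : A.rank = k) :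
    ∃ γ : Fin k → κ, (A.submatrix id γ).rank = k := by
  obtain ⟨s, hsub, hspan, hind⟩ := exists_linearIndependent ℝ (Set.range Aᵀ)
  have hfin : s.Finite := hind.setFinite
  haveI := hfin.fintype
  have hcard : Fintype.card s = k := by
    rw [← Set.toFinset_card, ← finrank_span_set_eq_card hind, hspan]
    exact (Matrix.rank_eq_finrank_span_cols A).symm.trans hk
  have e : Fin k ≃ s := (Fintype.equivFinOfCardEq hcard).symm
  choose γ hγ using fun i : Fin k => hsub (e i).2
  refine ⟨γ, ?_⟩
  have hrange : Set.range (A.submatrix id γ)ᵀ = s := by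
    ext v
    constructor
    · rintro ⟨i, rfl⟩
      have : (A.submatrix id γ)ᵀ i = Aᵀ (γ i) := by ext a; rfl
      rw [this, hγ i]
      exact (e i).2
    · intro hv
      refine ⟨e.symm ⟨v, hv⟩, ?_⟩
      have : (A.submatrix id γ)ᵀ (e.symm ⟨v, hv⟩) = Aᵀ (γ (e.symm ⟨v, hv⟩)) := by ext a; rfl
      rw [this, hγ]
      simp
  rw [Matrix.rank_eq_finrank_span_cols, Matrix.col, hrange, hspan]
  exact (Matrix.rank_eq_finrank_span_cols A).symm.trans hk

lemma det_ne_zero_of_rank_eq {k : ℕ} (C : Matrix (Fin k) (Fin k) ℝ) (h : C.rank = k) :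
    C.det ≠ 0 := by
  intro h0
  obtain ⟨v, hv, hv0⟩ := (Matrix.exists_mulVec_eq_zero_iff).2 h0
  have hrange : LinearMap.range C.mulVecLin = ⊤ := by
    apply Submodule.eq_top_of_finrank_eq
    rw [← Matrix.rank]  -- rank def
    simp [h]
  have hsurj : Function.Surjective C.mulVecLin := LinearMap.range_eq_top.1 hrange
  have hinj : Function.Injective C.mulVecLin :=
    (LinearMap.injective_iff_surjective).2 hsurj
  apply hv
  have : C.mulVecLin v = C.mulVecLin 0 := by simpa [Matrix.mulVecLin_apply] using hv0
  exact hinj this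

lemma exists_minor (A : Matrix ι κ ℝ) {k : ℕ} (hk : A.rank = k) :
    ∃ (ρ : Fin k → ι) (γ : Fin k → κ), (A.submatrix ρ γ).det ≠ 0 := by
  obtain ⟨γ, hγ⟩ := exists_cols A hk
  have h2 : (A.submatrix id γ)ᵀ.rank = k := by rw [Matrix.rank_transpose]; exact hγ
  obtain ⟨ρ, hρ⟩ := exists_cols (A.submatrix id γ)ᵀ h2
  refine ⟨ρ, γ, ?_⟩
  have he : A.submatrix ρ γ = ((A.submatrix id γ)ᵀ.submatrix id ρ)ᵀ := by ext i j; rfl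
  rw [he, Matrix.det_transpose]
  exact det_ne_zero_of_rank_eq _ hρ




lemma range_eq_insert_image_compl {α β : Type*} (f : α → β) (a : α) :
    Set.range f = insert (f a) (f '' {a}ᶜ) := by
  ext u
  simp only [Set.mem_range, Set.mem_insert_iff, Set.mem_image, Set.mem_compl_iff,
    Set.mem_singleton_iff]
  constructor
  · rintro ⟨i, rfl⟩
    by_cases h : i = a
    · left; rw [h]
    · right; exact ⟨i, h, rfl⟩
  · rintro (rfl | ⟨i, -, rfl⟩)
    · exact ⟨a, rfl⟩
    · exact ⟨i, rfl⟩

lemma exists_good_full_rank {l n m : ℕ} (Q : Matrix (Fin l) (Fin n) ℝ) :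
    ∃ (M : Matrix (Fin l) (Fin n) ℝ) (B₀ : Matrix (Fin l) (Fin m) ℝ),
      (∀ j : Fin n, (fun i => M i j - Q i j) ∈ LinearMap.ker (Qᵀ.mulVecLin)) ∧
      (Matrix.fromCols M B₀).rank = min l (n + m) := by
  set K := LinearMap.ker (Qᵀ.mulVecLin) with hK
  set U := LinearMap.range (Q.mulVecLin) with hU
  -- U ⊔ K = ⊤
  have hdisj : U ⊓ K = ⊥ := by
    rw [Submodule.eq_bot_iff]
    rintro v ⟨⟨w, rfl⟩, hv2⟩
    have hv2' : Qᵀ *ᵥ (Q *ᵥ w) = 0 := hv2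
    have : (Q *ᵥ w) ⬝ᵥ (Q *ᵥ w) = 0 := by
      rw [Matrix.dotProduct_mulVec, ← Matrix.mulVec_transpose, hv2']
      simp
    exact dotProduct_self_eq_zero.1 this
  have hrle : Q.rank ≤ l := by simpa using Q.rank_le_card_height
  have hfU : finrank ℝ U = Q.rank := rfl
  have hfK : finrank ℝ K = l - Q.rank := by
    have h2 := LinearMap.finrank_range_add_finrank_ker (Qᵀ.mulVecLin)
    have hr : finrank ℝ (LinearMap.range (Qᵀ.mulVecLin)) = Q.rank := by
      rw [← Matrix.rank, Matrix.rank_transpose]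
    have hpi : finrank ℝ (Fin l → ℝ) = l := by simp
    rw [hr, hpi, ← hK] at h2
    omega
  have htop : U ⊔ K = ⊤ := by
    apply Submodule.eq_top_of_finrank_eq
    have := Submodule.finrank_sup_add_finrank_inf_eq U K
    rw [hdisj] at this
    simp only [finrank_bot, add_zero] at this
    rw [this, hfU, hfK]
    simp
    omega
  -- the set of achievable ranks
  set S : Set ℕ := {R | ∃ (M : Matrix (Fin l) (Fin n) ℝ) (B₀ : Matrix (Fin l) (Fin m) ℝ),
    (∀ j : Fin n, (fun i => M i j - Q i j) ∈ K) ∧ (Matrix.fromCols M B₀).rank = R} with hS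
  have hne : S.Nonempty := ⟨(Matrix.fromCols Q (0 : Matrix (Fin l) (Fin m) ℝ)).rank,
    Q, 0, fun j => by
      have hz : (fun i : Fin l => Q i j - Q i j) = (0 : Fin l → ℝ) := by funext i; simp
      rw [hz]; exact K.zero_mem, rfl⟩
  have hbdd : BddAbove S := by
    refine ⟨l, ?_⟩
    rintro R ⟨M, B₀, -, rfl⟩
    simpa using (Matrix.fromCols M B₀).rank_le_card_height
  set R := sSup S with hRdef
  obtain ⟨M, B₀, hvalid, hrank⟩ : R ∈ S := Nat.sSup_mem hne hbdd
  have hRmin : R ≤ min l (n + m) := by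
    rw [← hrank]
    refine le_min ?_ ?_
    · simpa using (Matrix.fromCols M B₀).rank_le_card_height
    · simpa using (Matrix.fromCols M B₀).rank_le_card_width
  rcases eq_or_lt_of_le hRmin with heq | hlt
  · exact ⟨M, B₀, hvalid, hrank.trans heq⟩
  -- improvement step: contradiction
  exfalso
  set g : (Fin n ⊕ Fin m) → (Fin l → ℝ) := fun c => (Matrix.fromCols M B₀)ᵀ c with hg
  set T := span ℝ (Set.range g) with hT
  have hfT : finrank ℝ T = R := by
    rw [hT]; exact (Matrix.rank_eq_finrank_span_cols _).symm.trans hrank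
  have hTl : R < l := lt_of_lt_of_le hlt (min_le_left _ _)
  have hTnm : R < n + m := lt_of_lt_of_le hlt (min_le_right _ _)
  have hTne : T ≠ ⊤ := by
    intro h
    rw [h] at hfT
    have : finrank ℝ (⊤ : Submodule ℝ (Fin l → ℝ)) = l := by simp
    omega
  -- columns are dependent
  have hdep : ¬ LinearIndependent ℝ g := by
    intro hli
    have := finrank_span_eq_card hli
    rw [← hT] at this
    simp [hfT] at this
    omega
  obtain ⟨w, hsum, j₀, hj₀⟩ := Fintype.not_linearIndependent_iff.1 hdep
  have hmem : g j₀ ∈ span ℝ (g '' {j₀}ᶜ) := by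
    have hsum' : ∑ i ∈ Finset.univ.erase j₀, w i • g i + w j₀ • g j₀ = 0 := by
      rw [Finset.sum_erase_add _ _ (Finset.mem_univ j₀)]; exact hsum
    have h1 : w j₀ • g j₀ = -(∑ i ∈ Finset.univ.erase j₀, w i • g i) :=
      eq_neg_of_add_eq_zero_right hsum'
    have hgj : g j₀ = (w j₀)⁻¹ • (-(∑ i ∈ Finset.univ.erase j₀, w i • g i)) := by
      rw [← h1, smul_smul, inv_mul_cancel₀ hj₀, one_smul]
    rw [hgj]
    refine Submodule.smul_mem _ _ (Submodule.neg_mem _ (Submodule.sum_mem _ ?_))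
    intro i hi
    refine Submodule.smul_mem _ _ (Submodule.subset_span ⟨i, ?_, rfl⟩)
    simpa using Finset.ne_of_mem_erase hi
  have hTT : span ℝ (g '' {j₀}ᶜ) = T := by
    rw [hT, range_eq_insert_image_compl g j₀, Submodule.span_insert_eq_span hmem]
  -- find a replacement vector v
  obtain ⟨v, hvT, hvK⟩ : ∃ v, v ∉ T ∧ ∀ j, j₀ = Sum.inl j → (fun i => v i - Q i j) ∈ K := by
    cases j₀ with
    | inr t =>
      have : ∃ v, v ∉ T := by
        by_contra hc
        push_neg at hc
        exact hTne (Submodule.eq_top_iff'.2 hc)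
      obtain ⟨v, hv⟩ := this
      exact ⟨v, hv, fun j h => by simp at h⟩
    | inl j =>
      by_contra hc
      push_neg at hc
      have hall : ∀ v : Fin l → ℝ, (fun i => v i - Q i j) ∈ K → v ∈ T := by
        intro v hv
        by_contra hvT
        obtain ⟨j', hj', hnot⟩ := hc v hvT
        cases Sum.inl_injective hj'
        exact hnot hv
      have hKT : K ≤ T := by
        intro u hu
        have h1 : ((fun i => Q i j + u i) : Fin l → ℝ) ∈ T := by
          apply hall; simpa using hu
        have h2 : ((fun i => Q i j) : Fin l → ℝ) ∈ T := by
          apply hall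
          have hz : (fun i : Fin l => Q i j - Q i j) = (0 : Fin l → ℝ) := by funext i; simp
          rw [hz]; exact K.zero_mem
        have := Submodule.sub_mem T h1 h2
        have he : ((fun i => Q i j + u i) : Fin l → ℝ) - (fun i => Q i j) = u := by
          funext i; simp
        rwa [he] at this
      have hUT : U ≤ T := by
        rw [hU, Matrix.range_mulVecLin, Matrix.col, Submodule.span_le]
        rintro u ⟨j', rfl⟩
        have hcol : (Qᵀ j' : Fin l → ℝ) = g (Sum.inl j') - (fun i => M i j' - Q i j') := by
          funext i
          show Q i j' = M i j' - (M i j' - Q i j')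
          ring
        rw [hcol]
        exact Submodule.sub_mem T (Submodule.subset_span ⟨Sum.inl j', rfl⟩) (hKT (hvalid j'))
      have : (⊤ : Submodule ℝ (Fin l → ℝ)) ≤ T := htop ▸ sup_le hUT hKT
      exact hTne (top_le_iff.1 this)
  -- build the improved pair
  set g' : (Fin n ⊕ Fin m) → (Fin l → ℝ) := Function.update g j₀ v with hg'
  set M' : Matrix (Fin l) (Fin n) ℝ := Matrix.of fun a j => g' (Sum.inl j) a with hM'
  set B' : Matrix (Fin l) (Fin m) ℝ := Matrix.of fun a t => g' (Sum.inr t) a with hB'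
  have hcols : (Matrix.fromCols M' B')ᵀ = fun c => g' c := by
    funext c a
    cases c <;> rfl
  have hrange' : Set.range g' = insert v (g '' {j₀}ᶜ) := by
    have h1 : g' '' {j₀}ᶜ = g '' {j₀}ᶜ := by
      apply Set.image_congr
      intro i hi
      exact Function.update_of_ne (by simpa using hi) _ _
    rw [range_eq_insert_image_compl g' j₀, h1, hg', Function.update_self]
  have hrank' : (Matrix.fromCols M' B').rank = finrank ℝ (span ℝ (insert v (g '' {j₀}ᶜ))) := by
    have hre : span ℝ (Set.range fun c => g' c) = span ℝ (insert v (g '' {j₀}ᶜ)) := by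
      rw [show (Set.range fun c => g' c) = Set.range g' from rfl, hrange']
    rw [Matrix.rank_eq_finrank_span_cols, Matrix.col, hcols, hre]
  have hgt : R < (Matrix.fromCols M' B').rank := by
    rw [hrank', ← hfT]
    apply Submodule.finrank_lt_finrank_of_lt
    rw [Submodule.span_insert, hTT]
    refine lt_of_le_of_ne le_sup_right fun h => hvT ?_
    rw [h]
    exact Submodule.mem_sup_left (Submodule.mem_span_singleton_self v)
  have hmemS : (Matrix.fromCols M' B').rank ∈ S := by
    refine ⟨M', B', ?_, rfl⟩
    intro j
    by_cases hj : Sum.inl j = j₀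
    · have : g' (Sum.inl j) = v := by rw [hj]; exact Function.update_self _ _ _
      show (fun i => g' (Sum.inl j) i - Q i j) ∈ K
      rw [this]
      exact hvK j hj.symm
    · show (fun i => g' (Sum.inl j) i - Q i j) ∈ K
      rw [hg', Function.update_of_ne hj]
      exact hvalid j
  have := le_csSup hbdd hmemS
  omega




lemma valid_matrix_eq {l n : ℕ} (Q M : Matrix (Fin l) (Fin n) ℝ)
    (h : ∀ j : Fin n, (fun i => M i j - Q i j) ∈ LinearMap.ker (Qᵀ.mulVecLin)) :
    Qᵀ * M = Qᵀ * Q ∧ Mᵀ * Q = Qᵀ * Q := by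
  have h1 : Qᵀ * (M - Q) = 0 := by
    ext a j
    have h2 := h j
    rw [LinearMap.mem_ker] at h2
    have h3 := congrFun (show Qᵀ *ᵥ (fun i => M i j - Q i j) = 0 from h2) a
    simpa [Matrix.mul_apply, Matrix.mulVec, dotProduct, Matrix.sub_apply] using h3
  have hQM : Qᵀ * M = Qᵀ * Q := by
    have h4 : Qᵀ * M - Qᵀ * Q = 0 := by rw [← Matrix.mul_sub]; exact h1
    have := sub_eq_zero.1 h4
    exact this
  refine ⟨hQM, ?_⟩
  calc Mᵀ * Q = (Qᵀ * M)ᵀ := by rw [Matrix.transpose_mul, Matrix.transpose_transpose]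
    _ = (Qᵀ * Q)ᵀ := by rw [hQM]
    _ = Qᵀ * Q := by rw [Matrix.transpose_mul, Matrix.transpose_transpose]

end RelGenericAux

open RelGenericAux Module Submodule Set in
/-- `{(E,J,Q,B) ∈ Σ^H : rank [E, B] = min ℓ (n+m)}` is relative
generic in `Σ^H_{ℓ,n,m}`. -/
theorem rank_EB_relGeneric_in_SigmaH (ℓ n m : ℕ) (hℓ : 1 ≤ ℓ) (hn : 1 ≤ n) (hm : 1 ≤ m) :
    RelGeneric
      {x ∈ SigmaH ℓ n m | (Matrix.fromCols (mE x) (mB x)).rank = min ℓ (n + m)}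
      (SigmaH ℓ n m) := by
  classical
  set k := min ℓ (n + m) with hk
  set varOf : Fin ℓ → (Fin n ⊕ Fin m) → IdxH ℓ n m := fun i c =>
    Sum.elim (fun j => Sum.inl (i, j)) (fun j => Sum.inr (Sum.inr (Sum.inr (i, j)))) c with hvarOf
  have hkey : ∀ (x : IdxH ℓ n m → ℝ) i c, Matrix.fromCols (mE x) (mB x) i c = x (varOf i c) := by
    intro x i c; cases c <;> rfl
  set W : Set (IdxH ℓ n m → ℝ) :=
    {x | ∀ rc : (Fin k → Fin ℓ) × (Fin k → Fin n ⊕ Fin m),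
      ((Matrix.fromCols (mE x) (mB x)).submatrix rc.1 rc.2).det = 0} with hW
  have heval : ∀ (x : IdxH ℓ n m → ℝ) (rc : (Fin k → Fin ℓ) × (Fin k → Fin n ⊕ Fin m)),
      MvPolynomial.eval x ((Matrix.of fun a b => MvPolynomial.X (R := ℝ) (varOf (rc.1 a) (rc.2 b))).det)
        = ((Matrix.fromCols (mE x) (mB x)).submatrix rc.1 rc.2).det := by
    intro x rc
    rw [RingHom.map_det]
    congr 1
    ext a b
    simp [Matrix.map_apply, hkey]
  refine ⟨W, ?_, ?_, ?_⟩
  · -- IsAlgebraicSet W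
    set e := Fintype.equivFin ((Fin k → Fin ℓ) × (Fin k → Fin n ⊕ Fin m)) with he
    refine ⟨Fintype.card ((Fin k → Fin ℓ) × (Fin k → Fin n ⊕ Fin m)),
      fun i => (Matrix.of fun a b => MvPolynomial.X
        (varOf ((e.symm i).1 a) ((e.symm i).2 b))).det, ?_⟩
    ext x
    simp only [hW, Set.mem_setOf_eq]
    constructor
    · intro h i
      rw [heval]
      exact h _
    · intro h rc
      have h2 := h (e rc)
      rw [heval] at h2
      simpa using h2
  · -- Sᶜ ∩ V ⊆ W ∩ V
    rintro x ⟨hxS, hxV⟩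
    refine ⟨?_, hxV⟩
    intro rc
    by_contra hne
    apply hxS
    refine ⟨hxV, ?_⟩
    refine le_antisymm ?_ (rank_ge_of_minor _ rc.1 rc.2 hne)
    refine le_min ?_ ?_
    · simpa using (Matrix.fromCols (mE x) (mB x)).rank_le_card_height
    · simpa using (Matrix.fromCols (mE x) (mB x)).rank_le_card_width
  · -- density
    intro x hx
    rw [Metric.mem_closure_iff]
    intro δ hδ
    obtain ⟨M, B₀, hvalid, hrank⟩ := exists_good_full_rank (m := m) (mQ x)
    have hQM : (mQ x)ᵀ * M = (mQ x)ᵀ * (mQ x) := (valid_matrix_eq _ _ hvalid).1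
    have hMQ : Mᵀ * (mQ x) = (mQ x)ᵀ * (mQ x) := (valid_matrix_eq _ _ hvalid).2
    obtain ⟨ρ, γ, hdet⟩ := exists_minor _ hrank
    set pert : IdxH ℓ n m → ℝ := Sum.elim (fun p => M p.1 p.2)
      (Sum.elim (fun _ => 0) (Sum.elim (fun _ => 0) (fun p => B₀ p.1 p.2))) with hpert
    set Cb : ℝ := (∑ i, |pert i|) + 1 with hCb
    have hCbpos : 0 < Cb := by positivity
    have hCble : ∀ i, |pert i| ≤ Cb := by
      intro i
      have h1 : |pert i| ≤ ∑ i, |pert i| :=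
        Finset.single_le_sum (fun i _ => abs_nonneg (pert i)) (Finset.mem_univ i)
      linarith
    set A := (Matrix.fromCols (mE x) (mB x)).submatrix ρ γ with hA
    set D := (Matrix.fromCols M B₀).submatrix ρ γ with hD
    set G : Polynomial ℝ :=
      (Matrix.of fun a b => Polynomial.C (A a b) * Polynomial.X + Polynomial.C (D a b)).det with hG
    have hGeval : ∀ t : ℝ, G.eval t = (Matrix.of fun a b => A a b * t + D a b).det := by
      intro t
      rw [hG, ← Polynomial.coe_evalRingHom, RingHom.map_det]
      congr 1
      ext a b
      simp [Matrix.map_apply]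
    have hGne : G ≠ 0 := by
      intro h0
      apply hdet
      have h1 := hGeval 0
      rw [h0] at h1
      have h2 : (Matrix.of fun a b => A a b * 0 + D a b) = D := by
        ext a b; simp
      rw [h2] at h1
      simpa using h1.symm
    obtain ⟨T, hTgt, hTroot⟩ :
        ∃ T, T ∈ Set.Ioi (max 1 (Cb / δ)) ∧ T ∉ {t | G.IsRoot t} :=
      ((Set.Ioi_infinite _).diff (Polynomial.finite_setOf_isRoot hGne)).nonempty
    have hT1 : (1:ℝ) < T := lt_of_le_of_lt (le_max_left _ _) hTgt
    have hTpos : (0:ℝ) < T := lt_trans one_pos hT1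
    set ε := T⁻¹ with hε
    have hεpos : 0 < ε := inv_pos.2 hTpos
    set y : IdxH ℓ n m → ℝ := fun idx => x idx + ε * pert idx with hy
    have hyE : mE y = mE x + ε • M := by
      ext i j; simp [mE, hy, hpert, Matrix.add_apply, Matrix.smul_apply, smul_eq_mul]
    have hyJ : mJ y = mJ x := by ext i j; simp [mJ, hy, hpert]
    have hyQ : mQ y = mQ x := by ext i j; simp [mQ, hy, hpert]
    have hyB : mB y = mB x + ε • B₀ := by
      ext i j; simp [mB, hy, hpert, Matrix.add_apply, Matrix.smul_apply, smul_eq_mul]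
    obtain ⟨hxJ, hxEQ, hxPSD⟩ := hx
    have hEQy : (mE y)ᵀ * mQ y = (mE x)ᵀ * (mQ x) + ε • ((mQ x)ᵀ * (mQ x)) := by
      rw [hyE, hyQ, Matrix.transpose_add, Matrix.transpose_smul, Matrix.add_mul,
        Matrix.smul_mul, hMQ]
    have hQEy : (mQ y)ᵀ * mE y = (mQ x)ᵀ * (mE x) + ε • ((mQ x)ᵀ * (mQ x)) := by
      rw [hyE, hyQ, Matrix.mul_add, Matrix.mul_smul, hQM]
    have hpsd2 : (ε • ((mQ x)ᵀ * (mQ x))).PosSemidef := by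
      have h3 : ε • ((mQ x)ᵀ * (mQ x)) = (Real.sqrt ε • (mQ x))ᵀ * (Real.sqrt ε • (mQ x)) := by
        rw [Matrix.transpose_smul, Matrix.smul_mul, Matrix.mul_smul, smul_smul,
          Real.mul_self_sqrt hεpos.le]
      rw [h3]
      have h4 := Matrix.posSemidef_conjTranspose_mul_self (Real.sqrt ε • (mQ x))
      rwa [Matrix.conjTranspose_eq_transpose_of_trivial] at h4
    have hyV : y ∈ SigmaH ℓ n m := by
      refine ⟨?_, ?_, ?_⟩
      · rw [hyJ]; exact hxJ
      · rw [hEQy, hQEy, hxEQ]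
      · rw [hEQy]; exact hxPSD.add hpsd2
    have hfromC : Matrix.fromCols (mE y) (mB y)
        = Matrix.fromCols (mE x) (mB x) + ε • Matrix.fromCols M B₀ := by
      rw [hyE, hyB]
      ext i c
      cases c <;> simp [Matrix.fromCols, Matrix.add_apply, Matrix.smul_apply]
    have hdet2 : ((Matrix.fromCols (mE y) (mB y)).submatrix ρ γ).det = ε ^ k * G.eval T := by
      have hsub : (Matrix.fromCols (mE y) (mB y)).submatrix ρ γ
          = ε • (Matrix.of fun a b => A a b * T + D a b) := by
        rw [hfromC]
        ext a b
        have hTne : T ≠ 0 := hTpos.ne'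
        simp only [hA, hD, Matrix.submatrix_apply, Matrix.add_apply, Matrix.smul_apply,
          Matrix.of_apply, smul_eq_mul, hε]
        field_simp

      rw [hsub, Matrix.det_smul, hGeval T]
      simp
      left; rfl
    have hyW : y ∉ W := by
      intro hyW
      have h6 := hyW (ρ, γ)
      rw [hdet2] at h6
      have h7 : G.eval T ≠ 0 := hTroot
      have h8 : ε ^ k ≠ 0 := pow_ne_zero _ hεpos.ne'
      exact (mul_ne_zero h8 h7) h6
    refine ⟨y, ⟨hyW, hyV⟩, ?_⟩
    rw [dist_pi_lt_iff hδ]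
    intro i
    rw [Real.dist_eq]
    have h9 : |x i - y i| = ε * |pert i| := by
      rw [hy]
      simp only []
      rw [show x i - (x i + ε * pert i) = -(ε * pert i) by ring, abs_neg, abs_mul,
        abs_of_pos hεpos]
    rw [h9]
    have h10 : Cb / δ < T := lt_of_le_of_lt (le_max_right _ _) hTgt
    have h11 : Cb < T * δ := by
      rwa [div_lt_iff₀ hδ] at h10
    have h12 : ε * Cb < δ := by
      rw [hε, inv_mul_eq_div, div_lt_iff₀ hTpos]
      linarith
    calc ε * |pert i| ≤ ε * Cb := by
          apply mul_le_mul_of_nonneg_left (hCble i) hεpos.le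
      _ < δ := h12
end
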